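/- arXiv:1612.04220 — 7 statements merged into one kernel-verified Lean document; each statement's English description precedes it below -/
import Mathlib

section
/- A Borel measurable function α : [1,∞) → (0,∞) is RO-varying at infinity (i.e., there exist b > 1 and c ≥ 1 such that c⁻¹ ≤ α(λt)/α(t) ≤ c for all t ≥ 1 and λ ∈ [1,b]) if and only if α admits a representation α(t) = exp(β(t) + ∫₁ᵗ γ(τ)/τ dτ) for t ≥ 1, where β and γ are real-valued, Borel measurable, bounded functions on [1,∞). -/
open MeasureTheory

private lemma aux_intervalIntegrable_of_bounded {g : ℝ → ℝ} {B : ℝ}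
    (hg : Measurable g) (hB : ∀ x, ‖g x‖ ≤ B) (a b : ℝ) :
    IntervalIntegrable g volume a b := by
  rw [intervalIntegrable_iff]
  exact Measure.integrableOn_of_bounded measure_Ioc_lt_top.ne hg.aestronglyMeasurable
    (Filter.Eventually.of_forall hB)

set_option maxHeartbeats 1000000 in
/-- A Borel measurable function `α : [1,∞) → (0,∞)` is RO-varying at infinity
iff it admits the representation `α(t) = exp(β(t) + ∫₁ᵗ γ(τ)/τ dτ)` with `β, γ`
Borel measurable and bounded on `[1,∞)`. -/
theorem ro_iff_representation (α : ℝ → ℝ) (hmeas : Measurable α)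
    (hpos : ∀ t ≥ (1:ℝ), 0 < α t) :
    (∃ b > (1:ℝ), ∃ c ≥ (1:ℝ), ∀ t ≥ (1:ℝ), ∀ l ∈ Set.Icc (1:ℝ) b,
        c⁻¹ ≤ α (l * t) / α t ∧ α (l * t) / α t ≤ c) ↔
    (∃ β γ : ℝ → ℝ, Measurable β ∧ Measurable γ ∧
        (∃ M : ℝ, ∀ t ≥ (1:ℝ), |β t| ≤ M ∧ |γ t| ≤ M) ∧
        ∀ t ≥ (1:ℝ), α t = Real.exp (β t + ∫ τ in Set.Ioc (1:ℝ) t, γ τ / τ)) := by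
  constructor
  · -- forward direction
    rintro ⟨b, hb, c, hc, hro⟩
    have hb0 : (0:ℝ) < b := by linarith
    have hc0 : (0:ℝ) < c := by linarith
    set L : ℝ := Real.log b with hLdef
    set C : ℝ := Real.log c with hCdef
    have hL : 0 < L := Real.log_pos hb
    have hC : 0 ≤ C := Real.log_nonneg hc
    set f : ℝ → ℝ := fun s => Real.log (α (Real.exp s)) with hfdef
    have hfmeas : Measurable f := Real.measurable_log.comp (hmeas.comp Real.measurable_exp)
    -- key estimate on log scale
    have key : ∀ x : ℝ, 0 ≤ x → ∀ u ∈ Set.Icc (0:ℝ) L, |f (x + u) - f x| ≤ C := by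
      intro x hx u hu
      have ht : (1:ℝ) ≤ Real.exp x := Real.one_le_exp hx
      have hl1 : (1:ℝ) ≤ Real.exp u := Real.one_le_exp hu.1
      have hl2 : Real.exp u ≤ b := by
        calc Real.exp u ≤ Real.exp L := Real.exp_le_exp.2 hu.2
        _ = b := Real.exp_log hb0
      obtain ⟨h1, h2⟩ := hro (Real.exp x) ht (Real.exp u) ⟨hl1, hl2⟩
      have heq : Real.exp u * Real.exp x = Real.exp (x + u) := by
        rw [← Real.exp_add]; ring_nf
      rw [heq] at h1 h2
      have hax : 0 < α (Real.exp x) := hpos _ ht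
      have haxu : 0 < α (Real.exp (x + u)) :=
        hpos _ (Real.one_le_exp (by linarith [hu.1]))
      have hratio : f (x + u) - f x = Real.log (α (Real.exp (x + u)) / α (Real.exp x)) := by
        rw [Real.log_div haxu.ne' hax.ne']
      rw [hratio, abs_le]
      constructor
      · have := Real.log_le_log (by positivity) h1
        rwa [Real.log_inv] at this
      · exact Real.log_le_log (by positivity) h2
    -- growth bound
    have growth : ∀ n : ℕ, ∀ s : ℝ, 0 ≤ s → s ≤ n * L → |f s| ≤ |f 0| + C * n := by
      intro n
      induction n with
      | zero =>
        intro s h0 h1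
        have : s = 0 := le_antisymm (by simpa using h1) h0
        simp [this]
      | succ n ih =>
        intro s h0 h1
        by_cases hs : s ≤ n * L
        · have h := ih s h0 hs
          have hCn : C * n ≤ C * (n + 1) := by nlinarith
          push_cast
          push_cast at h
          linarith
        · push_neg at hs
          set x := max (s - L) 0 with hxdef
          have hx0 : 0 ≤ x := le_max_right _ _
          have hxn : x ≤ n * L := by
            have h1' : s - L ≤ n * L := by push_cast at h1; linarith
            exact max_le h1' (by positivity)
          have hu : s - x ∈ Set.Icc (0:ℝ) L := by
            constructor
            · have : x ≤ s := max_le (by linarith) h0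
              linarith
            · have : s - L ≤ x := le_max_left _ _
              linarith
          have hkey := key x hx0 (s - x) hu
          rw [show x + (s - x) = s by ring] at hkey
          have habs : |f s| - |f x| ≤ |f s - f x| := abs_sub_abs_le_abs_sub _ _
          have hih := ih x hx0 hxn
          push_cast
          linarith
    -- local integrability of f on nonnegative intervals
    have hfint : ∀ a b : ℝ, 0 ≤ a → 0 ≤ b → IntervalIntegrable f volume a b := by
      intro a b ha hb'
      rw [intervalIntegrable_iff]
      set R : ℝ := max a b with hRdef
      have hR0 : 0 ≤ R := le_trans ha (le_max_left _ _)
      set n : ℕ := ⌈R / L⌉₊ with hndef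
      have hRn : R ≤ n * L := by
        have h := Nat.le_ceil (R / L)
        calc R = (R / L) * L := by field_simp
        _ ≤ n * L := by nlinarith [Nat.le_ceil (R / L)]
      have hsub : Set.uIoc a b ⊆ Set.Icc 0 R := by
        intro y hy
        rw [Set.mem_uIoc] at hy
        constructor
        · rcases hy with ⟨h, _⟩ | ⟨h, _⟩ <;> linarith
        · rcases hy with ⟨_, h⟩ | ⟨_, h⟩ <;>
            [exact h.trans (le_max_right _ _); exact h.trans (le_max_left _ _)]
      apply IntegrableOn.mono_set _ hsub
      apply Measure.integrableOn_of_bounded (M := |f 0| + C * n) measure_Icc_lt_top.ne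
        hfmeas.aestronglyMeasurable
      filter_upwards [ae_restrict_mem measurableSet_Icc] with y hy
      exact growth n y hy.1 (hy.2.trans hRn)
    -- define γ and g
    set γ : ℝ → ℝ := fun τ => if 1 ≤ τ then (Real.log (α (b * τ)) - Real.log (α τ)) / L else 0
      with hγdef
    have hγmeas : Measurable γ := by
      apply Measurable.ite measurableSet_Ici
      · exact ((Real.measurable_log.comp (hmeas.comp (measurable_const_mul b))).sub
          (Real.measurable_log.comp hmeas)).div_const L
      · exact measurable_const
    have hγbound : ∀ τ : ℝ, |γ τ| ≤ C / L := by
      intro τ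
      by_cases hτ : 1 ≤ τ
      · obtain ⟨h1, h2⟩ := hro τ hτ b ⟨le_of_lt hb, le_refl b⟩
        have haτ : 0 < α τ := hpos _ hτ
        have habτ : 0 < α (b * τ) := hpos _ (by nlinarith)
        have hlog : |Real.log (α (b * τ)) - Real.log (α τ)| ≤ C := by
          rw [← Real.log_div habτ.ne' haτ.ne', abs_le]
          constructor
          · have := Real.log_le_log (by positivity) h1
            rwa [Real.log_inv] at this
          · exact Real.log_le_log (by positivity) h2
        simp only [hγdef, if_pos hτ]
        rw [abs_div, abs_of_pos hL]
        gcongr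
      · simp only [hγdef, if_neg hτ, abs_zero]
        positivity
    set g : ℝ → ℝ := fun τ => γ τ / τ with hgdef
    have hgmeas : Measurable g := hγmeas.div measurable_id
    have hgbound : ∀ τ : ℝ, ‖g τ‖ ≤ C / L := by
      intro τ
      by_cases hτ : 1 ≤ τ
      · have hτ0 : 0 < τ := by linarith
        simp only [hgdef, Real.norm_eq_abs, abs_div]
        calc |γ τ| / |τ| ≤ |γ τ| / 1 := by
              apply div_le_div_of_nonneg_left (abs_nonneg _) one_pos
              rw [abs_of_pos hτ0]; exact hτ
        _ = |γ τ| := div_one _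
        _ ≤ C / L := hγbound τ
      · simp only [hgdef, hγdef, if_neg hτ, Real.norm_eq_abs, zero_div, abs_zero]
        positivity
    have hgint : ∀ a b : ℝ, IntervalIntegrable g volume a b :=
      aux_intervalIntegrable_of_bounded hgmeas hgbound
    -- define β
    set β : ℝ → ℝ := fun t => Real.log (α t) - ∫ x in (1:ℝ)..t, g x with hβdef
    have hβmeas : Measurable β := by
      apply (Real.measurable_log.comp hmeas).sub
      exact (intervalIntegral.continuous_primitive hgint 1).measurable
    refine ⟨β, γ, hβmeas, hγmeas, ⟨2 * C + |f 0| + C / L, ?_⟩, ?_⟩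
    · -- bounds
      intro t ht
      have ht0 : (0:ℝ) < t := by linarith
      set x : ℝ := Real.log t with hxdef
      have hx0 : 0 ≤ x := Real.log_nonneg ht
      have hexpx : Real.exp x = t := Real.exp_log ht0
      -- γ on the exponential scale
      have hgammaexp : ∀ s : ℝ, 0 ≤ s → γ (Real.exp s) = (f (s + L) - f s) / L := by
        intro s hs
        have h1 : (1:ℝ) ≤ Real.exp s := Real.one_le_exp hs
        have h2 : b * Real.exp s = Real.exp (s + L) := by
          rw [Real.exp_add, Real.exp_log hb0]; ring
        simp only [hγdef, if_pos h1, h2]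
        rfl
      have himg : Real.exp '' Set.Ioc 0 x = Set.Ioc 1 t := by
        ext y
        simp only [Set.mem_image, Set.mem_Ioc]
        constructor
        · rintro ⟨s, ⟨hs1, hs2⟩, rfl⟩
          refine ⟨by simpa using Real.exp_lt_exp.2 hs1, ?_⟩
          rw [← hexpx]
          exact Real.exp_le_exp.2 hs2
        · rintro ⟨hy1, hy2⟩
          have hy0 : (0:ℝ) < y := by linarith
          refine ⟨Real.log y, ⟨Real.log_pos hy1, ?_⟩, Real.exp_log hy0⟩
          rw [hxdef]
          exact Real.log_le_log hy0 hy2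
      have hchg : (∫ τ in Set.Ioc (1:ℝ) t, g τ) = ∫ s in Set.Ioc (0:ℝ) x, γ (Real.exp s) := by
        rw [← himg]
        rw [integral_image_eq_integral_abs_deriv_smul measurableSet_Ioc
          (fun s _ => (Real.hasDerivAt_exp s).hasDerivWithinAt) Real.exp_injective.injOn g]
        apply setIntegral_congr_fun measurableSet_Ioc
        intro s _
        have h := Real.exp_pos s
        simp only [hgdef, smul_eq_mul, abs_of_pos h]
        field_simp
      have hchg2 : (∫ s in Set.Ioc (0:ℝ) x, γ (Real.exp s))
          = ∫ s in Set.Ioc (0:ℝ) x, (f (s + L) - f s) / L := by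
        apply setIntegral_congr_fun measurableSet_Ioc
        intro s hs
        exact hgammaexp s (le_of_lt hs.1)
      -- interval-integral computations
      have hint1 : IntervalIntegrable (fun s => f (s + L)) volume 0 x := by
        have h := (hfint L (x + L) (le_of_lt hL) (by linarith)).comp_add_right L
        simpa using h
      have hint2 : IntervalIntegrable f volume 0 x := hfint 0 x le_rfl hx0
      have hsplit : (∫ s in (0:ℝ)..x, (f (s + L) - f s))
          = (∫ s in (0:ℝ)..x, f (s + L)) - ∫ s in (0:ℝ)..x, f s :=
        intervalIntegral.integral_sub hint1 hint2
      have htrans : (∫ s in (0:ℝ)..x, f (s + L)) = ∫ s in L..(x + L), f s := by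
        have h := intervalIntegral.integral_comp_add_right (a := (0:ℝ)) (b := x) f L
        simpa using h
      have hchasles1 : (∫ s in (0:ℝ)..x, f s) + (∫ s in x..(x + L), f s)
          = ∫ s in (0:ℝ)..(x + L), f s :=
        intervalIntegral.integral_add_adjacent_intervals hint2
          (hfint x (x + L) hx0 (by linarith))
      have hchasles2 : (∫ s in (0:ℝ)..L, f s) + (∫ s in L..(x + L), f s)
          = ∫ s in (0:ℝ)..(x + L), f s :=
        intervalIntegral.integral_add_adjacent_intervals (hfint 0 L le_rfl (le_of_lt hL))
          (hfint L (x + L) (le_of_lt hL) (by linarith))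
      set A : ℝ := ∫ s in x..(x + L), (f s - f x) with hAdef
      set B2 : ℝ := ∫ s in (0:ℝ)..L, f s with hB2def
      -- bound the two pieces
      have hbound1 : |A| ≤ C * L := by
        have h := intervalIntegral.norm_integral_le_of_norm_le_const (C := C)
          (f := fun s => f s - f x) (a := x) (b := x + L) ?_
        · rw [Real.norm_eq_abs] at h
          have hxx : |x + L - x| = L := by rw [show x + L - x = L by ring, abs_of_pos hL]
          rw [hxx] at h
          exact h
        · intro s hs
          rw [Set.uIoc_of_le (by linarith)] at hs
          have hu : s - x ∈ Set.Icc (0:ℝ) L := ⟨le_of_lt (by linarith [hs.1]), by linarith [hs.2]⟩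
          have h := key x hx0 (s - x) hu
          rw [show x + (s - x) = s by ring] at h
          simpa [Real.norm_eq_abs] using h
      have hbound2 : |B2| ≤ (|f 0| + C) * L := by
        have h := intervalIntegral.norm_integral_le_of_norm_le_const (C := |f 0| + C)
          (f := f) (a := 0) (b := L) ?_
        · rw [Real.norm_eq_abs] at h
          rw [sub_zero, abs_of_pos hL] at h
          exact h
        · intro s hs
          rw [Set.uIoc_of_le (le_of_lt hL)] at hs
          have h := key 0 le_rfl s ⟨le_of_lt hs.1, hs.2⟩
          rw [zero_add] at h
          have habs : |f s| - |f 0| ≤ |f s - f 0| := abs_sub_abs_le_abs_sub _ _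
          rw [Real.norm_eq_abs]
          linarith
      have hconst : (∫ s in x..(x + L), f x) = L * f x := by
        rw [intervalIntegral.integral_const, smul_eq_mul]
        ring_nf
      have hsubA : A = (∫ s in x..(x + L), f s) - L * f x := by
        rw [hAdef, intervalIntegral.integral_sub (hfint x (x + L) hx0 (by linarith))
          intervalIntegrable_const, hconst]
      -- value of the primitive at t
      have hIval : (∫ x' in (1:ℝ)..t, g x') = (1 / L) * ∫ s in (0:ℝ)..x, (f (s + L) - f s) := by
        rw [intervalIntegral.integral_of_le ht, hchg, hchg2,
          ← intervalIntegral.integral_of_le hx0, intervalIntegral.integral_div]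
        ring
      have hft : f x = Real.log (α t) := by rw [hfdef]; simp only [hexpx]
      have hβval : β t = f x - (1 / L) * ∫ s in (0:ℝ)..x, (f (s + L) - f s) := by
        rw [hβdef]
        simp only
        rw [hIval, hft]
      have hE : (∫ s in (0:ℝ)..x, (f (s + L) - f s)) = A + L * f x - B2 := by
        rw [hsubA]
        linarith [hsplit, htrans, hchasles1, hchasles2]
      have hβt : β t = (B2 - A) / L := by
        rw [hβval, hE]
        field_simp
        ring
      constructor
      · calc |β t| = |B2 - A| / L := by rw [hβt, abs_div, abs_of_pos hL]
        _ ≤ (|B2| + |A|) / L := by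
              gcongr
              have h := abs_add_le B2 (-A)
              simpa [sub_eq_add_neg] using h
        _ ≤ 2 * C + |f 0| := by
              rw [div_le_iff₀ hL]
              nlinarith [hbound1, hbound2]
        _ ≤ 2 * C + |f 0| + C / L := by
              have := div_nonneg hC hL.le
              linarith
      · calc |γ t| ≤ C / L := hγbound t
        _ ≤ 2 * C + |f 0| + C / L := by
              have := abs_nonneg (f 0)
              linarith
    · -- representation
      intro t ht
      have hIoc : (∫ τ in Set.Ioc (1:ℝ) t, γ τ / τ) = ∫ x in (1:ℝ)..t, g x :=
        (intervalIntegral.integral_of_le ht).symm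
      rw [hIoc, hβdef]
      simp only
      rw [sub_add_cancel, Real.exp_log (hpos t ht)]
  · -- reverse direction
    rintro ⟨β, γ, hβm, hγm, ⟨M, hM⟩, hrep⟩
    have hM0 : 0 ≤ M := le_trans (abs_nonneg _) (hM 1 le_rfl).1
    set K : ℝ := 2 * M + M * Real.log 2 with hKdef
    have hlog2 : 0 ≤ Real.log 2 := Real.log_nonneg (by norm_num)
    have hK0 : 0 ≤ K := by positivity
    refine ⟨2, one_lt_two, Real.exp K, Real.one_le_exp hK0, ?_⟩
    intro t ht l hl
    obtain ⟨hl1, hl2⟩ := hl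
    have ht0 : (0:ℝ) < t := by linarith
    have hlt : (1:ℝ) ≤ l * t := by nlinarith
    have htlt : t ≤ l * t := by nlinarith
    -- integrability of the integrand
    have hint : ∀ p q : ℝ, 1 ≤ p → IntegrableOn (fun τ => γ τ / τ) (Set.Ioc p q) volume := by
      intro p q hp
      apply Measure.integrableOn_of_bounded (M := M) measure_Ioc_lt_top.ne
        (hγm.div measurable_id).aestronglyMeasurable
      filter_upwards [ae_restrict_mem measurableSet_Ioc] with y hy
      have hy1 : (1:ℝ) ≤ y := le_of_lt (lt_of_le_of_lt hp hy.1)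
      have hy0 : (0:ℝ) < y := by linarith
      simp only [Pi.div_apply, id_eq]
      rw [Real.norm_eq_abs, abs_div, abs_of_pos hy0]
      calc |γ y| / y ≤ |γ y| / 1 := div_le_div_of_nonneg_left (abs_nonneg _) one_pos hy1
      _ = |γ y| := div_one _
      _ ≤ M := (hM y hy1).2
    have hsplit : (∫ τ in Set.Ioc (1:ℝ) (l * t), γ τ / τ)
        = (∫ τ in Set.Ioc (1:ℝ) t, γ τ / τ) + ∫ τ in Set.Ioc t (l * t), γ τ / τ := by
      rw [← Set.Ioc_union_Ioc_eq_Ioc ht htlt]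
      rw [setIntegral_union (Set.Ioc_disjoint_Ioc_of_le le_rfl) measurableSet_Ioc
        (hint 1 t le_rfl) (hint t (l * t) ht)]
    -- bound the tail integral
    have hMdiv : IntegrableOn (fun τ => M / τ) (Set.Ioc t (l * t)) volume := by
      apply Measure.integrableOn_of_bounded (M := M) measure_Ioc_lt_top.ne
        (measurable_const.div measurable_id).aestronglyMeasurable
      filter_upwards [ae_restrict_mem measurableSet_Ioc] with y hy
      have hy1 : (1:ℝ) ≤ y := le_trans ht (le_of_lt hy.1)
      simp only [Pi.div_apply, id_eq]
      rw [Real.norm_eq_abs, abs_div, abs_of_nonneg hM0, abs_of_pos (by linarith : (0:ℝ) < y)]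
      calc M / y ≤ M / 1 := div_le_div_of_nonneg_left hM0 one_pos hy1
      _ = M := div_one _
    have htail : |∫ τ in Set.Ioc t (l * t), γ τ / τ| ≤ M * Real.log 2 := by
      have h1 : |∫ τ in Set.Ioc t (l * t), γ τ / τ| ≤ ∫ τ in Set.Ioc t (l * t), M / τ := by
        rw [← Real.norm_eq_abs]
        apply norm_integral_le_of_norm_le hMdiv
        filter_upwards [ae_restrict_mem measurableSet_Ioc] with y hy
        have hy1 : (1:ℝ) ≤ y := le_trans ht (le_of_lt hy.1)
        have hy0 : (0:ℝ) < y := by linarith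
        rw [Real.norm_eq_abs, abs_div, abs_of_pos hy0]
        gcongr
        exact (hM y hy1).2
      have h0 : (0:ℝ) ∉ Set.uIcc t (l * t) := by
        rw [Set.uIcc_of_le htlt, Set.mem_Icc]
        rintro ⟨h, -⟩
        linarith
      have h2 : (∫ τ in Set.Ioc t (l * t), M / τ) = M * Real.log l := by
        rw [← intervalIntegral.integral_of_le htlt]
        simp_rw [div_eq_mul_inv]
        rw [intervalIntegral.integral_const_mul, integral_inv h0]
        congr 1
        rw [mul_div_assoc, div_self ht0.ne', mul_one]
      have h3 : Real.log l ≤ Real.log 2 := Real.log_le_log (by linarith) hl2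
      calc |∫ τ in Set.Ioc t (l * t), γ τ / τ| ≤ M * Real.log l := h1.trans_eq h2
      _ ≤ M * Real.log 2 := by nlinarith
    -- put it together
    have hratio : α (l * t) / α t
        = Real.exp ((β (l * t) - β t) + ∫ τ in Set.Ioc t (l * t), γ τ / τ) := by
      rw [hrep t ht, hrep (l * t) hlt, ← Real.exp_sub]
      congr 1
      rw [hsplit]
      ring
    have hβb1 := (hM t ht).1
    have hβb2 := (hM (l * t) hlt).1
    have habs1 : -(2 * M) ≤ β (l * t) - β t := by
      rw [abs_le] at hβb1 hβb2
      linarith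
    have habs2 : β (l * t) - β t ≤ 2 * M := by
      rw [abs_le] at hβb1 hβb2
      linarith
    rw [abs_le] at htail
    constructor
    · rw [hratio, ← Real.exp_neg]
      apply Real.exp_le_exp.2
      rw [hKdef]
      linarith [htail.1]
    · rw [hratio]
      apply Real.exp_le_exp.2
      rw [hKdef]
      linarith [htail.2]
end

section
/- Let α ∈ RO. For every w in the Hörmander space H^α(ℝⁿ), w belongs to H^{(s₀)}(ℝⁿ) for every s₀ < σ₀(α), and every w ∈ H^{(s₁)}(ℝⁿ) with s₁ > σ₁(α) belongs to H^α(ℝⁿ); moreover both embeddings H^{(s₁)}(ℝⁿ) ↪ H^α(ℝⁿ) ↪ H^{(s₀)}(ℝⁿ) are continuous. -/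
open MeasureTheory

/-- The class RO of RO-varying functions at infinity. -/
def RO (α : ℝ → ℝ) : Prop :=
  Measurable α ∧ (∀ t ≥ (1:ℝ), 0 < α t) ∧
    ∃ b > (1:ℝ), ∃ c ≥ (1:ℝ), ∀ t ≥ (1:ℝ), ∀ l ∈ Set.Icc (1:ℝ) b,
      c⁻¹ ≤ α (l * t) / α t ∧ α (l * t) / α t ≤ c

/-- Lower Matuszewska index. -/
noncomputable def sigma0 (α : ℝ → ℝ) : ℝ :=
  sSup {s : ℝ | ∃ c > (0:ℝ), ∀ t ≥ (1:ℝ), ∀ l ≥ (1:ℝ), c * l ^ s ≤ α (l * t) / α t}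

/-- Upper Matuszewska index. -/
noncomputable def sigma1 (α : ℝ → ℝ) : ℝ :=
  sInf {s : ℝ | ∃ c > (0:ℝ), ∀ t ≥ (1:ℝ), ∀ l ≥ (1:ℝ), α (l * t) / α t ≤ c * l ^ s}

/-- The Hörmander weight `ξ ↦ α(⟨ξ⟩)` with `⟨ξ⟩ = (1+|ξ|²)^{1/2}`. -/
noncomputable def wt (α : ℝ → ℝ) {n : ℕ} (ξ : EuclideanSpace ℝ (Fin n)) : ℝ :=
  α (Real.sqrt (1 + ‖ξ‖ ^ 2))


lemma ro_iter {α : ℝ → ℝ} {b c : ℝ} (hpos : ∀ t ≥ (1:ℝ), 0 < α t) (hb : 1 < b) (hc : 1 ≤ c)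
    (h : ∀ t ≥ (1:ℝ), ∀ l ∈ Set.Icc (1:ℝ) b, c⁻¹ ≤ α (l * t) / α t ∧ α (l * t) / α t ≤ c) :
    ∀ k : ℕ, ∀ t ≥ (1:ℝ), ∀ l, 1 ≤ l → l ≤ b ^ k →
      (c⁻¹) ^ k ≤ α (l * t) / α t ∧ α (l * t) / α t ≤ c ^ k := by
  have hc0 : 0 < c := lt_of_lt_of_le one_pos hc
  intro k
  induction k with
  | zero =>
    intro t ht l hl1 hlb
    simp only [pow_zero] at hlb ⊢
    have : l = 1 := le_antisymm hlb hl1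
    subst this
    rw [one_mul, div_self (ne_of_gt (hpos t ht))]
    exact ⟨le_refl 1, le_refl 1⟩
  | succ k ih =>
    intro t ht l hl1 hlb
    by_cases hcase : l ≤ b ^ k
    · obtain ⟨h1, h2⟩ := ih t ht l hl1 hcase
      constructor
      · refine le_trans ?_ h1
        exact pow_le_pow_of_le_one (by positivity) (inv_le_one_of_one_le₀ hc) (Nat.le_succ k)
      · exact le_trans h2 (pow_le_pow_right₀ hc (Nat.le_succ k))
    · push_neg at hcase
      have hbk : (1:ℝ) ≤ b ^ k := one_le_pow₀ (le_of_lt hb)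
      have hbk0 : (0:ℝ) < b ^ k := lt_of_lt_of_le one_pos hbk
      set m := l / b ^ k with hm
      have hm1 : 1 ≤ m := (one_le_div hbk0).mpr (le_of_lt hcase)
      have hmb : m ≤ b := by
        rw [hm, div_le_iff₀ hbk0]
        calc l ≤ b ^ (k+1) := hlb
        _ = b * b ^ k := by ring
      have hml : m * b ^ k = l := div_mul_cancel₀ l (ne_of_gt hbk0)
      have hbkt : (1:ℝ) ≤ b ^ k * t := one_le_mul_of_one_le_of_one_le hbk ht
      have hA : α (l * t) = α (m * (b ^ k * t)) := by rw [← hml]; ring_nf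
      obtain ⟨hlo1, hhi1⟩ := h (b ^ k * t) hbkt m ⟨hm1, hmb⟩
      obtain ⟨hlo2, hhi2⟩ := ih t ht (b ^ k) hbk (le_refl _)
      have hD : 0 < α t := hpos t ht
      have hB : 0 < α (b ^ k * t) := hpos _ hbkt
      have hsplit : α (l * t) / α t =
          (α (m * (b ^ k * t)) / α (b ^ k * t)) * (α (b ^ k * t) / α t) := by
        rw [hA]; field_simp
      constructor
      · rw [hsplit, pow_succ']
        exact mul_le_mul hlo1 hlo2 (by positivity) (div_nonneg (hpos _ (one_le_mul_of_one_le_of_one_le hm1 hbkt)).le hB.le)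
      · rw [hsplit, pow_succ']
        exact mul_le_mul hhi1 hhi2 (div_nonneg hB.le hD.le) hc0.le

lemma rpow_logb_comm {c l b : ℝ} (hc0 : 0 < c) (hl0 : 0 < l) :
    c ^ (Real.logb b l) = l ^ (Real.logb b c) := by
  rw [Real.rpow_def_of_pos hc0, Real.rpow_def_of_pos hl0]
  congr 1
  simp only [Real.logb]
  ring

lemma ro_pow_bounds {α : ℝ → ℝ} {b c : ℝ} (hpos : ∀ t ≥ (1:ℝ), 0 < α t) (hb : 1 < b)
    (hc : 1 ≤ c)
    (h : ∀ t ≥ (1:ℝ), ∀ l ∈ Set.Icc (1:ℝ) b, c⁻¹ ≤ α (l * t) / α t ∧ α (l * t) / α t ≤ c) :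
    (∀ t ≥ (1:ℝ), ∀ l ≥ (1:ℝ), c⁻¹ * l ^ (-(Real.logb b c)) ≤ α (l * t) / α t) ∧
    (∀ t ≥ (1:ℝ), ∀ l ≥ (1:ℝ), α (l * t) / α t ≤ c * l ^ (Real.logb b c)) := by
  have hc0 : (0:ℝ) < c := lt_of_lt_of_le one_pos hc
  have hb0 : (0:ℝ) < b := lt_trans one_pos hb
  have key : ∀ t ≥ (1:ℝ), ∀ l ≥ (1:ℝ),
      c⁻¹ * l ^ (-(Real.logb b c)) ≤ α (l * t) / α t ∧
      α (l * t) / α t ≤ c * l ^ (Real.logb b c) := by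
    intro t ht l hl
    have hl0 : (0:ℝ) < l := lt_of_lt_of_le one_pos hl
    set k := ⌈Real.logb b l⌉₊ with hk
    have hlog0 : 0 ≤ Real.logb b l := Real.logb_nonneg hb hl
    have hk1 : Real.logb b l ≤ (k:ℝ) := Nat.le_ceil _
    have hk2 : (k:ℝ) ≤ Real.logb b l + 1 := (Nat.ceil_lt_add_one hlog0).le
    have hlbk : l ≤ b ^ k := by
      have h1 : l = b ^ (Real.logb b l) := (Real.rpow_logb hb0 (ne_of_gt hb) hl0).symm
      have h2 : b ^ (Real.logb b l) ≤ b ^ ((k:ℝ)) :=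
        Real.rpow_le_rpow_of_exponent_le hb.le hk1
      rw [h1]
      calc b ^ (Real.logb b l) ≤ b ^ ((k:ℝ)) := h2
      _ = b ^ k := Real.rpow_natCast b k
    obtain ⟨hlow, hhigh⟩ := ro_iter hpos hb hc h k t ht l hl hlbk
    have hck : (c:ℝ) ^ k = c ^ ((k:ℝ)) := (Real.rpow_natCast c k).symm
    have hcik : ((c:ℝ)⁻¹) ^ k = c ^ (-(k:ℝ)) := by
      rw [inv_pow, hck, ← Real.rpow_neg hc0.le]
    constructor
    · refine le_trans ?_ hlow
      rw [hcik]
      have : c ^ (-(Real.logb b l + 1)) ≤ c ^ (-(k:ℝ)) :=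
        Real.rpow_le_rpow_of_exponent_le hc (neg_le_neg hk2)
      refine le_trans (le_of_eq ?_) this
      rw [neg_add, Real.rpow_add hc0, Real.rpow_neg_one, mul_comm,
        Real.rpow_neg hc0.le, rpow_logb_comm hc0 hl0, Real.rpow_neg hl0.le]
    · refine le_trans hhigh ?_
      rw [hck]
      have : c ^ ((k:ℝ)) ≤ c ^ (Real.logb b l + 1) :=
        Real.rpow_le_rpow_of_exponent_le hc hk2
      refine le_trans this (le_of_eq ?_)
      rw [Real.rpow_add hc0, Real.rpow_one, mul_comm, rpow_logb_comm hc0 hl0]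
  exact ⟨fun t ht l hl => (key t ht l hl).1, fun t ht l hl => (key t ht l hl).2⟩

-- any lower exponent ≤ any upper exponent
lemma lower_le_upper {α : ℝ → ℝ} (hpos : ∀ t ≥ (1:ℝ), 0 < α t) {s s' : ℝ} {c0 c1 : ℝ}
    (hc0 : 0 < c0) (hc1 : 0 < c1)
    (h0 : ∀ t ≥ (1:ℝ), ∀ l ≥ (1:ℝ), c0 * l ^ s ≤ α (l * t) / α t)
    (h1 : ∀ t ≥ (1:ℝ), ∀ l ≥ (1:ℝ), α (l * t) / α t ≤ c1 * l ^ s') : s ≤ s' := by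
  by_contra hlt
  push_neg at hlt
  set l : ℝ := (c1 / c0 + 1) ^ (s - s')⁻¹ with hldef
  have hbase : (1:ℝ) < c1 / c0 + 1 := by
    have : 0 < c1 / c0 := div_pos hc1 hc0
    linarith
  have hl1 : (1:ℝ) < l :=
    Real.one_lt_rpow_iff_of_pos (lt_trans one_pos hbase) |>.mpr
      (Or.inl ⟨hbase, by simp only [inv_pos]; linarith⟩)
  have hl0 : (0:ℝ) < l := lt_trans one_pos hl1
  have e1 := h0 1 le_rfl l hl1.le
  have e2 := h1 1 le_rfl l hl1.le
  have echain : c0 * l ^ s ≤ c1 * l ^ s' := le_trans e1 e2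
  have h3 : l ^ (s - s') ≤ c1 / c0 := by
    rw [Real.rpow_sub hl0, div_le_div_iff₀ (Real.rpow_pos_of_pos hl0 s') hc0]
    nlinarith [Real.rpow_pos_of_pos hl0 s, Real.rpow_pos_of_pos hl0 s']
  have h4 : l ^ (s - s') = c1 / c0 + 1 := by
    rw [hldef, ← Real.rpow_mul (by positivity : (0:ℝ) ≤ c1 / c0 + 1),
      inv_mul_cancel₀ (by intro hz; rw [sub_eq_zero] at hz; exact absurd hz (by linarith)),
      Real.rpow_one]
  linarith [h4 ▸ h3]

lemma sqrt_one_add_ge {n : ℕ} (ξ : EuclideanSpace ℝ (Fin n)) :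
    1 ≤ Real.sqrt (1 + ‖ξ‖ ^ 2) := by
  nlinarith [Real.sq_sqrt (show (0:ℝ) ≤ 1 + ‖ξ‖ ^ 2 by positivity),
    Real.sqrt_nonneg (1 + ‖ξ‖ ^ 2), sq_nonneg ‖ξ‖,
    sq_nonneg (Real.sqrt (1 + ‖ξ‖ ^ 2) - 1)]

lemma sq_sqrt_rpow {n : ℕ} (ξ : EuclideanSpace ℝ (Fin n)) (s : ℝ) :
    ((Real.sqrt (1 + ‖ξ‖ ^ 2)) ^ s) ^ 2 = ((1:ℝ) + ‖ξ‖ ^ 2) ^ s := by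
  set l := Real.sqrt (1 + ‖ξ‖ ^ 2) with hl
  have hl0 : 0 < l := lt_of_lt_of_le one_pos (sqrt_one_add_ge ξ)
  have h2 : l ^ (2:ℕ) = 1 + ‖ξ‖ ^ 2 := Real.sq_sqrt (by positivity)
  calc (l ^ s) ^ (2:ℕ) = (l ^ s) ^ ((2:ℕ):ℝ) := (Real.rpow_natCast _ 2).symm
  _ = l ^ (s * 2) := (Real.rpow_mul hl0.le s 2).symm
  _ = l ^ ((2:ℝ) * s) := by ring_nf
  _ = (l ^ ((2:ℕ):ℝ)) ^ s := by rw [← Real.rpow_mul hl0.le]; norm_num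
  _ = (l ^ (2:ℕ)) ^ s := by rw [Real.rpow_natCast]
  _ = ((1:ℝ) + ‖ξ‖ ^ 2) ^ s := by rw [h2]

-- pointwise lower bound: (1+|ξ|²)^{s₀} ≤ C · wt²
lemma wt_lower {α : ℝ → ℝ} {n : ℕ} (hpos : ∀ t ≥ (1:ℝ), 0 < α t) {s s₀ c0 : ℝ}
    (hc0 : 0 < c0) (hs : s₀ ≤ s)
    (h0 : ∀ t ≥ (1:ℝ), ∀ l ≥ (1:ℝ), c0 * l ^ s ≤ α (l * t) / α t) (ξ : EuclideanSpace ℝ (Fin n)) :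
    ((1:ℝ) + ‖ξ‖ ^ 2) ^ s₀ ≤ ((c0 * α 1) ^ 2)⁻¹ * (wt α ξ) ^ 2 := by
  set l := Real.sqrt (1 + ‖ξ‖ ^ 2) with hl
  have hl1 : 1 ≤ l := sqrt_one_add_ge ξ
  have hl0 : 0 < l := lt_of_lt_of_le one_pos hl1
  have ha1 : 0 < α 1 := hpos 1 le_rfl
  have hK : 0 < c0 * α 1 := mul_pos hc0 ha1
  have h1 : c0 * α 1 * l ^ s ≤ α l := by
    have h := h0 1 le_rfl l hl1
    rw [mul_one, le_div_iff₀ ha1] at h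
    calc c0 * α 1 * l ^ s = c0 * l ^ s * α 1 := by ring
    _ ≤ α l := h
  have h2 : (c0 * α 1) ^ 2 * (l ^ s) ^ 2 ≤ (α l) ^ 2 := by
    rw [← mul_pow]
    exact pow_le_pow_left₀ (by positivity) h1 2
  have hwt : wt α ξ = α l := rfl
  have h3 : (l ^ s) ^ 2 ≤ ((c0 * α 1) ^ 2)⁻¹ * (wt α ξ) ^ 2 := by
    rw [hwt]
    calc (l ^ s) ^ 2 = ((c0 * α 1) ^ 2)⁻¹ * ((c0 * α 1) ^ 2 * (l ^ s) ^ 2) := by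
          field_simp
    _ ≤ ((c0 * α 1) ^ 2)⁻¹ * (α l) ^ 2 :=
          mul_le_mul_of_nonneg_left h2 (inv_nonneg.mpr (sq_nonneg _))
  refine le_trans ?_ h3
  have : l ^ s₀ ≤ l ^ s := Real.rpow_le_rpow_of_exponent_le hl1 hs
  calc ((1:ℝ) + ‖ξ‖ ^ 2) ^ s₀ = (l ^ s₀) ^ 2 := (sq_sqrt_rpow ξ s₀).symm
  _ ≤ (l ^ s) ^ 2 := pow_le_pow_left₀ (by positivity) this 2

-- pointwise upper bound: wt² ≤ C · (1+|ξ|²)^{s₁}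
lemma wt_upper {α : ℝ → ℝ} {n : ℕ} (hpos : ∀ t ≥ (1:ℝ), 0 < α t) {s s₁ c1 : ℝ}
    (hc1 : 0 < c1) (hs : s ≤ s₁)
    (h1 : ∀ t ≥ (1:ℝ), ∀ l ≥ (1:ℝ), α (l * t) / α t ≤ c1 * l ^ s) (ξ : EuclideanSpace ℝ (Fin n)) :
    (wt α ξ) ^ 2 ≤ (c1 * α 1) ^ 2 * ((1:ℝ) + ‖ξ‖ ^ 2) ^ s₁ := by
  set l := Real.sqrt (1 + ‖ξ‖ ^ 2) with hl
  have hl1 : 1 ≤ l := sqrt_one_add_ge ξ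
  have hl0 : 0 < l := lt_of_lt_of_le one_pos hl1
  have ha1 : 0 < α 1 := hpos 1 le_rfl
  have hαl : 0 < α l := hpos l hl1
  have h2 : α l ≤ c1 * α 1 * l ^ s := by
    have := h1 1 le_rfl l hl1
    rw [mul_one, div_le_iff₀ ha1] at this
    linarith [this]
  have hwt : wt α ξ = α l := rfl
  have h3 : (α l) ^ 2 ≤ (c1 * α 1) ^ 2 * (l ^ s) ^ 2 := by
    rw [← mul_pow]
    exact pow_le_pow_left₀ hαl.le h2 2
  rw [hwt]
  refine le_trans h3 ?_
  apply mul_le_mul_of_nonneg_left _ (by positivity)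
  rw [sq_sqrt_rpow ξ s]
  exact Real.rpow_le_rpow_of_exponent_le (by nlinarith [sq_nonneg ‖ξ‖]) hs


/-- continuous embeddings `H^{(s₁)}(ℝⁿ) ↪ H^α(ℝⁿ) ↪ H^{(s₀)}(ℝⁿ)` for
`s₀ < σ₀(α)` and `s₁ > σ₁(α)`, with `H^α` described on the Fourier side as the weighted
`L²`-space of Fourier transforms `W = ŵ`. -/
theorem hormander_sobolev_embeddings (n : ℕ) (α : ℝ → ℝ) (hα : RO α) :
    (∀ s₀ < sigma0 α, ∃ C > (0:ℝ), ∀ W : EuclideanSpace ℝ (Fin n) → ℂ, Measurable W →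
      Integrable (fun ξ => (wt α ξ) ^ 2 * ‖W ξ‖ ^ 2) →
        Integrable (fun ξ : EuclideanSpace ℝ (Fin n) =>
            ((1:ℝ) + ‖ξ‖ ^ 2) ^ s₀ * ‖W ξ‖ ^ 2) ∧
          ∫ ξ : EuclideanSpace ℝ (Fin n), ((1:ℝ) + ‖ξ‖ ^ 2) ^ s₀ * ‖W ξ‖ ^ 2 ≤
            C * ∫ ξ, (wt α ξ) ^ 2 * ‖W ξ‖ ^ 2) ∧
    (∀ s₁ > sigma1 α, ∃ C > (0:ℝ), ∀ W : EuclideanSpace ℝ (Fin n) → ℂ, Measurable W →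
      Integrable (fun ξ : EuclideanSpace ℝ (Fin n) =>
          ((1:ℝ) + ‖ξ‖ ^ 2) ^ s₁ * ‖W ξ‖ ^ 2) →
        Integrable (fun ξ => (wt α ξ) ^ 2 * ‖W ξ‖ ^ 2) ∧
          ∫ ξ, (wt α ξ) ^ 2 * ‖W ξ‖ ^ 2 ≤
            C * ∫ ξ : EuclideanSpace ℝ (Fin n), ((1:ℝ) + ‖ξ‖ ^ 2) ^ s₁ * ‖W ξ‖ ^ 2) := by
  obtain ⟨hmeas, hpos, b, hb, c, hc, hbc⟩ := hα
  have hc0 : (0:ℝ) < c := lt_of_lt_of_le one_pos hc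
  obtain ⟨hlow, hhigh⟩ := ro_pow_bounds hpos hb hc hbc
  constructor
  · -- lower embedding
    intro s₀ hs₀
    simp only [sigma0] at hs₀
    obtain ⟨s, hsmem, hss⟩ := exists_lt_of_lt_csSup
      (Set.nonempty_of_mem (show -(Real.logb b c) ∈
        {s : ℝ | ∃ c > (0:ℝ), ∀ t ≥ (1:ℝ), ∀ l ≥ (1:ℝ), c * l ^ s ≤ α (l * t) / α t}
        from ⟨c⁻¹, inv_pos.mpr hc0, hlow⟩)) hs₀
    obtain ⟨c0, hc0', h0⟩ := hsmem
    have ha1 : 0 < α 1 := hpos 1 le_rfl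
    refine ⟨((c0 * α 1) ^ 2)⁻¹, by positivity, ?_⟩
    intro W hW hint
    set C : ℝ := ((c0 * α 1) ^ 2)⁻¹ with hC
    have hCpos : 0 < C := by positivity
    have hptw : ∀ ξ : EuclideanSpace ℝ (Fin n),
        ((1:ℝ) + ‖ξ‖ ^ 2) ^ s₀ * ‖W ξ‖ ^ 2 ≤ C * ((wt α ξ) ^ 2 * ‖W ξ‖ ^ 2) := by
      intro ξ
      have h1 := wt_lower hpos hc0' hss.le h0 ξ
      calc ((1:ℝ) + ‖ξ‖ ^ 2) ^ s₀ * ‖W ξ‖ ^ 2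
          ≤ (C * (wt α ξ) ^ 2) * ‖W ξ‖ ^ 2 :=
            mul_le_mul_of_nonneg_right h1 (by positivity)
      _ = C * ((wt α ξ) ^ 2 * ‖W ξ‖ ^ 2) := by ring
    have haesm : AEStronglyMeasurable
        (fun ξ : EuclideanSpace ℝ (Fin n) => ((1:ℝ) + ‖ξ‖ ^ 2) ^ s₀ * ‖W ξ‖ ^ 2) volume :=
      (((continuous_const.add (continuous_norm.pow 2)).rpow_const
          (fun ξ => Or.inl (by positivity : (1:ℝ) + ‖ξ‖ ^ 2 ≠ 0))).measurable.mul
        (hW.norm.pow_const 2)).aestronglyMeasurable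
    have hfint : Integrable
        (fun ξ : EuclideanSpace ℝ (Fin n) => ((1:ℝ) + ‖ξ‖ ^ 2) ^ s₀ * ‖W ξ‖ ^ 2) := by
      refine (hint.const_mul C).mono' haesm (ae_of_all _ fun ξ => ?_)
      rw [Real.norm_eq_abs, abs_of_nonneg (by positivity)]
      exact hptw ξ
    refine ⟨hfint, ?_⟩
    have hmono := integral_mono hfint (hint.const_mul C) hptw
    simp_rw [← smul_eq_mul (a := C), integral_smul, smul_eq_mul] at hmono
    exact hmono
  · -- upper embedding
    intro s₁ hs₁
    simp only [gt_iff_lt, sigma1] at hs₁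
    obtain ⟨s, hsmem, hss⟩ := exists_lt_of_csInf_lt
      (Set.nonempty_of_mem (show Real.logb b c ∈
        {s : ℝ | ∃ c > (0:ℝ), ∀ t ≥ (1:ℝ), ∀ l ≥ (1:ℝ), α (l * t) / α t ≤ c * l ^ s}
        from ⟨c, hc0, hhigh⟩)) hs₁
    obtain ⟨c1, hc1', h1⟩ := hsmem
    have ha1 : 0 < α 1 := hpos 1 le_rfl
    refine ⟨(c1 * α 1) ^ 2, by positivity, ?_⟩
    intro W hW hint
    set C : ℝ := (c1 * α 1) ^ 2 with hC
    have hptw : ∀ ξ : EuclideanSpace ℝ (Fin n),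
        (wt α ξ) ^ 2 * ‖W ξ‖ ^ 2 ≤ C * (((1:ℝ) + ‖ξ‖ ^ 2) ^ s₁ * ‖W ξ‖ ^ 2) := by
      intro ξ
      have h2 := wt_upper hpos hc1' hss.le h1 ξ
      calc (wt α ξ) ^ 2 * ‖W ξ‖ ^ 2
          ≤ (C * ((1:ℝ) + ‖ξ‖ ^ 2) ^ s₁) * ‖W ξ‖ ^ 2 :=
            mul_le_mul_of_nonneg_right h2 (by positivity)
      _ = C * (((1:ℝ) + ‖ξ‖ ^ 2) ^ s₁ * ‖W ξ‖ ^ 2) := by ring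
    have hwtm : Measurable (fun ξ : EuclideanSpace ℝ (Fin n) => wt α ξ) :=
      hmeas.comp ((measurable_norm.pow_const 2).const_add 1).sqrt
    have haesm : AEStronglyMeasurable
        (fun ξ : EuclideanSpace ℝ (Fin n) => (wt α ξ) ^ 2 * ‖W ξ‖ ^ 2) volume :=
      ((hwtm.pow_const 2).mul (hW.norm.pow_const 2)).aestronglyMeasurable
    have hfint : Integrable
        (fun ξ : EuclideanSpace ℝ (Fin n) => (wt α ξ) ^ 2 * ‖W ξ‖ ^ 2) := by
      refine (hint.const_mul C).mono' haesm (ae_of_all _ fun ξ => ?_)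
      rw [Real.norm_eq_abs, abs_of_nonneg (by positivity)]
      exact hptw ξ
    refine ⟨hfint, ?_⟩
    have hmono := integral_mono hfint (hint.const_mul C) hptw
    simp_rw [← smul_eq_mul (a := C), integral_smul, smul_eq_mul] at hmono
    exact hmono
end

section
/- For α, η ∈ RO, the embedding H^η(ℝⁿ) ↪ H^α(ℝⁿ) holds and is continuous if and only if the function α/η is bounded in a neighborhood of infinity. -/
open MeasureTheory

lemma ro_bounds {α : ℝ → ℝ} {b c : ℝ} (hpos : ∀ t ≥ (1:ℝ), 0 < α t)
    (hb : 1 < b) (hc : 1 ≤ c)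
    (h : ∀ t ≥ (1:ℝ), ∀ l ∈ Set.Icc (1:ℝ) b, c⁻¹ ≤ α (l * t) / α t ∧ α (l * t) / α t ≤ c) :
    ∀ k : ℕ, ∀ t, 1 ≤ t → t ≤ b ^ k → α 1 / c ^ k ≤ α t ∧ α t ≤ c ^ k * α 1 := by
  have hc0 : (0:ℝ) < c := lt_of_lt_of_le one_pos hc
  intro k
  induction k with
  | zero =>
    intro t h1 h2
    have ht : t = 1 := le_antisymm (by simpa using h2) h1
    simp [ht]
  | succ k ih =>
    intro t h1 h2
    set s := max 1 (t / b) with hs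
    have hs1 : (1:ℝ) ≤ s := le_max_left _ _
    have hs0 : (0:ℝ) < s := lt_of_lt_of_le one_pos hs1
    have hsb : s ≤ b ^ k := by
      apply max_le (one_le_pow₀ hb.le)
      rw [div_le_iff₀ (lt_trans one_pos hb)]
      calc t ≤ b ^ (k + 1) := h2
        _ = b ^ k * b := pow_succ b k
    have hts : s ≤ t := max_le h1 (div_le_self (le_trans zero_le_one h1) hb.le)
    set l := t / s with hl
    have hl1 : 1 ≤ l := (one_le_div hs0).mpr hts
    have hlb : l ≤ b := by
      rcases le_total (t / b) 1 with hcase | hcase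
      · have : s = 1 := max_eq_left hcase
        rw [hl, this, div_one]
        exact (div_le_one (lt_trans one_pos hb)).mp hcase
      · have hsv : s = t / b := max_eq_right hcase
        have ht0 : t ≠ 0 := by positivity
        have : t / (t / b) = b := by field_simp
        rw [hl, hsv, this]
    have hls : l * s = t := div_mul_cancel₀ t (ne_of_gt hs0)
    obtain ⟨hlow, hupp⟩ := h s hs1 l ⟨hl1, hlb⟩
    obtain ⟨il, iu⟩ := ih s hs1 hsb
    have hαs := hpos s hs1
    rw [hls] at hlow hupp
    have hαt := hpos t h1
    constructor
    · have h1' : c⁻¹ * α s ≤ α t := by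
        rw [← le_div_iff₀ hαs] at *
        · exact hlow
      calc α 1 / c ^ (k + 1) = c⁻¹ * (α 1 / c ^ k) := by
            rw [pow_succ, ← div_div, div_eq_mul_inv, mul_comm]
        _ ≤ c⁻¹ * α s := by
            apply mul_le_mul_of_nonneg_left il (by positivity)
        _ ≤ α t := h1'
    · have h2' : α t ≤ c * α s := by
        rw [div_le_iff₀ hαs] at hupp; linarith
      calc α t ≤ c * α s := h2'
        _ ≤ c * (c ^ k * α 1) := by
            apply mul_le_mul_of_nonneg_left iu (by positivity)
        _ = c ^ (k + 1) * α 1 := by rw [pow_succ]; ring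

set_option maxHeartbeats 1000000

/-- for `α, η ∈ RO`, the continuous embedding `H^η(ℝⁿ) ↪ H^α(ℝⁿ)`
(described on the Fourier side) holds iff `α/η` is bounded near infinity. -/
theorem embedding_iff_ratio_bounded (n : ℕ) (hn : 0 < n) (α η : ℝ → ℝ)
    (hα : RO α) (hη : RO η) :
    ((∀ W : EuclideanSpace ℝ (Fin n) → ℂ, Measurable W →
        Integrable (fun ξ => (wt η ξ) ^ 2 * ‖W ξ‖ ^ 2) →
          Integrable (fun ξ => (wt α ξ) ^ 2 * ‖W ξ‖ ^ 2)) ∧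
      ∃ C > (0:ℝ), ∀ W : EuclideanSpace ℝ (Fin n) → ℂ, Measurable W →
        Integrable (fun ξ => (wt η ξ) ^ 2 * ‖W ξ‖ ^ 2) →
          ∫ ξ, (wt α ξ) ^ 2 * ‖W ξ‖ ^ 2 ≤ C * ∫ ξ, (wt η ξ) ^ 2 * ‖W ξ‖ ^ 2)
    ↔ ∃ T c : ℝ, ∀ t ≥ T, α t / η t ≤ c := by
  obtain ⟨hαm, hαpos, bα, hbα, cα, hcα, hαro⟩ := hα
  obtain ⟨hηm, hηpos, bη, hbη, cη, hcη, hηro⟩ := hη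
  have hcα0 : (0:ℝ) < cα := lt_of_lt_of_le one_pos hcα
  have hcη0 : (0:ℝ) < cη := lt_of_lt_of_le one_pos hcη
  have hsm : Measurable (fun ξ : EuclideanSpace ℝ (Fin n) => Real.sqrt (1 + ‖ξ‖ ^ 2)) :=
    (measurable_const.add (measurable_norm.pow_const 2)).sqrt
  have hwtα : Measurable (wt α (n := n)) := hαm.comp hsm
  have hwtη : Measurable (wt η (n := n)) := hηm.comp hsm
  have hs_ge : ∀ ξ : EuclideanSpace ℝ (Fin n), 1 ≤ Real.sqrt (1 + ‖ξ‖ ^ 2) := by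
    intro ξ
    rw [Real.one_le_sqrt]
    · nlinarith [sq_nonneg ‖ξ‖]
  constructor
  · rintro ⟨hInt, C, hC, hIneq⟩
    refine ⟨1, cα * (Real.sqrt C * cη), ?_⟩
    intro t ht
    have ht0 : (0:ℝ) < t := lt_of_lt_of_le one_pos ht
    have hηt := hηpos t ht
    have hαt := hαpos t ht
    set b := min bα bη with hbdef
    have hb1 : 1 < b := lt_min hbα hbη
    set A : Set (EuclideanSpace ℝ (Fin n)) :=
      (fun ξ : EuclideanSpace ℝ (Fin n) => Real.sqrt (1 + ‖ξ‖ ^ 2)) ⁻¹' Set.Icc t (b * t)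
      with hAdef
    have hA : MeasurableSet A := hsm measurableSet_Icc
    -- pointwise bounds on A
    have key : ∀ ξ ∈ A, (cα⁻¹ * α t ≤ wt α ξ ∧ wt α ξ ≤ cα * α t) ∧
        (cη⁻¹ * η t ≤ wt η ξ ∧ wt η ξ ≤ cη * η t) := by
      intro ξ hξ
      obtain ⟨hξ1, hξ2⟩ := hξ
      set s := Real.sqrt (1 + ‖ξ‖ ^ 2) with hsdef
      set l := s / t with hldef
      have hlt : l * t = s := div_mul_cancel₀ s (ne_of_gt ht0)
      have hl1 : 1 ≤ l := (one_le_div ht0).mpr hξ1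
      have hlb : l ≤ b := (div_le_iff₀ ht0).mpr hξ2
      have h1 := hαro t ht l ⟨hl1, hlb.trans (min_le_left _ _)⟩
      have h2 := hηro t ht l ⟨hl1, hlb.trans (min_le_right _ _)⟩
      rw [hlt] at h1 h2
      have e1 : wt α ξ = α s := rfl
      have e2 : wt η ξ = η s := rfl
      constructor
      · constructor
        · rw [e1]; exact (le_div_iff₀ hαt).mp h1.1
        · rw [e1]; have := (div_le_iff₀ hαt).mp h1.2; linarith
      · constructor
        · rw [e2]; exact (le_div_iff₀ hηt).mp h2.1
        · rw [e2]; have := (div_le_iff₀ hηt).mp h2.2; linarith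
    -- measure of A
    have hAsub : A ⊆ Metric.closedBall 0 (b * t) := by
      intro ξ hξ
      rw [Metric.mem_closedBall, dist_zero_right]
      have h1 : ‖ξ‖ ≤ Real.sqrt (1 + ‖ξ‖ ^ 2) := by
        nth_rewrite 1 [show ‖ξ‖ = Real.sqrt (‖ξ‖ ^ 2) by rw [Real.sqrt_sq (norm_nonneg ξ)]]
        exact Real.sqrt_le_sqrt (by linarith)
      exact h1.trans hξ.2
    have hμfin : volume A ≠ ⊤ :=
      ((measure_mono hAsub).trans_lt measure_closedBall_lt_top).ne
    have hμpos : 0 < volume A := by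
      set U : Set (EuclideanSpace ℝ (Fin n)) :=
        (fun ξ : EuclideanSpace ℝ (Fin n) => Real.sqrt (1 + ‖ξ‖ ^ 2)) ⁻¹' Set.Ioo t (b * t)
        with hUdef
      have hUopen : IsOpen U :=
        IsOpen.preimage ((continuous_const.add (continuous_norm.pow 2)).sqrt) isOpen_Ioo
      have hUne : U.Nonempty := by
        set m := (t + b * t) / 2 with hmdef
        have hm1 : t < m := by rw [hmdef]; nlinarith
        have hm2 : m < b * t := by rw [hmdef]; nlinarith
        have hm0 : 1 ≤ m := ht.trans hm1.le
        set r := Real.sqrt (m ^ 2 - 1) with hrdef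
        refine ⟨EuclideanSpace.single ⟨0, hn⟩ r, ?_⟩
        have hnorm : ‖EuclideanSpace.single (⟨0, hn⟩ : Fin n) r‖ = r := by
          rw [EuclideanSpace.norm_single, Real.norm_eq_abs,
            abs_of_nonneg (Real.sqrt_nonneg _)]
        have hval : Real.sqrt (1 + ‖EuclideanSpace.single (⟨0, hn⟩ : Fin n) r‖ ^ 2) = m := by
          rw [hnorm, hrdef, Real.sq_sqrt (by nlinarith)]
          rw [show (1:ℝ) + (m ^ 2 - 1) = m ^ 2 by ring, Real.sqrt_sq (by linarith)]
        show Real.sqrt (1 + ‖EuclideanSpace.single (⟨0, hn⟩ : Fin n) r‖ ^ 2) ∈ Set.Ioo t (b * t)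
        rw [hval]; exact ⟨hm1, hm2⟩
      have hUA : U ⊆ A := fun ξ hξ => ⟨hξ.1.le, hξ.2.le⟩
      exact lt_of_lt_of_le (hUopen.measure_pos volume hUne) (measure_mono hUA)
    set mA := (volume A).toReal with hmA
    have hmApos : 0 < mA := ENNReal.toReal_pos hμpos.ne' hμfin
    -- the test function
    set W : EuclideanSpace ℝ (Fin n) → ℂ := A.indicator (fun _ => 1) with hWdef
    have hWm : Measurable W := measurable_const.indicator hA
    have hfeq : ∀ β : ℝ → ℝ, (fun ξ : EuclideanSpace ℝ (Fin n) => (wt β ξ) ^ 2 * ‖W ξ‖ ^ 2)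
        = A.indicator (fun ξ => (wt β ξ) ^ 2) := by
      intro β
      funext ξ
      by_cases hξ : ξ ∈ A
      · rw [hWdef, Set.indicator_of_mem hξ, Set.indicator_of_mem hξ]; simp
      · rw [hWdef, Set.indicator_of_notMem hξ, Set.indicator_of_notMem hξ]; simp
    have hgint : Integrable (fun ξ => (wt η ξ) ^ 2 * ‖W ξ‖ ^ 2) := by
      rw [hfeq η, integrable_indicator_iff hA]
      apply Measure.integrableOn_of_bounded (M := (cη * η t) ^ 2) hμfin
        ((hwtη.pow_const 2).aestronglyMeasurable)
      apply ae_restrict_of_forall_mem hA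
      intro x hx
      rw [Real.norm_eq_abs, abs_of_nonneg (sq_nonneg _)]
      have h1 := (key x hx).2
      have h0 : 0 ≤ wt η x := le_trans (by positivity) h1.1
      exact pow_le_pow_left₀ h0 h1.2 2
    have hfint : Integrable (fun ξ => (wt α ξ) ^ 2 * ‖W ξ‖ ^ 2) := hInt W hWm hgint
    have hineq := hIneq W hWm hgint
    rw [hfeq α] at hfint
    rw [hfeq α, hfeq η, integral_indicator hA, integral_indicator hA] at hineq
    have hlow : (cα⁻¹ * α t) ^ 2 * mA ≤ ∫ ξ in A, (wt α ξ) ^ 2 := by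
      apply setIntegral_ge_of_const_le_real hA hμfin
      · intro x hx
        have h1 := (key x hx).1.1
        exact pow_le_pow_left₀ (by positivity) h1 2
      · rw [← integrable_indicator_iff hA]; exact hfint
    have hupp : ∫ ξ in A, (wt η ξ) ^ 2 ≤ (cη * η t) ^ 2 * mA := by
      have h1 : ∫ ξ in A, (wt η ξ) ^ 2 ≤ ∫ _ in A, (cη * η t) ^ 2 := by
        apply setIntegral_mono_on ?_ ?_ hA
        · intro x hx
          have h2 := (key x hx).2
          have h0 : 0 ≤ wt η x := le_trans (by positivity) h2.1
          exact pow_le_pow_left₀ h0 h2.2 2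
        · rw [← integrable_indicator_iff hA, ← hfeq η]; exact hgint
        · exact integrableOn_const hμfin
      rw [setIntegral_const, smul_eq_mul, mul_comm] at h1
      exact h1
    have hfinal : (cα⁻¹ * α t) ^ 2 ≤ C * (cη * η t) ^ 2 := by
      have h1 : (cα⁻¹ * α t) ^ 2 * mA ≤ C * (cη * η t) ^ 2 * mA := by
        calc (cα⁻¹ * α t) ^ 2 * mA ≤ ∫ ξ in A, (wt α ξ) ^ 2 := hlow
          _ ≤ C * ∫ ξ in A, (wt η ξ) ^ 2 := hineq
          _ ≤ C * ((cη * η t) ^ 2 * mA) := by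
              apply mul_le_mul_of_nonneg_left hupp hC.le
          _ = C * (cη * η t) ^ 2 * mA := by ring
      exact le_of_mul_le_mul_right h1 hmApos
    -- extract sqrt
    have hsq : cα⁻¹ * α t ≤ Real.sqrt C * (cη * η t) := by
      have h1 : Real.sqrt ((cα⁻¹ * α t) ^ 2) ≤ Real.sqrt (C * (cη * η t) ^ 2) :=
        Real.sqrt_le_sqrt hfinal
      rw [Real.sqrt_sq (by positivity), Real.sqrt_mul hC.le,
        Real.sqrt_sq (by positivity)] at h1
      exact h1
    rw [div_le_iff₀ hηt]
    calc α t = cα * (cα⁻¹ * α t) := by field_simp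
      _ ≤ cα * (Real.sqrt C * (cη * η t)) := by
          apply mul_le_mul_of_nonneg_left hsq hcα0.le
      _ = cα * (Real.sqrt C * cη) * η t := by ring
  · rintro ⟨T, c, hTc⟩
    obtain ⟨k, hk⟩ := pow_unbounded_of_one_lt (max T 1) hbα
    obtain ⟨j, hj⟩ := pow_unbounded_of_one_lt (max T 1) hbη
    have hbα1 := ro_bounds hαpos hbα hcα hαro
    have hbη1 := ro_bounds hηpos hbη hcη hηro
    have hα1 := hαpos 1 le_rfl
    have hη1 := hηpos 1 le_rfl
    set M0 := (cα ^ k * α 1) * (cη ^ j / η 1) with hM0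
    set M := max 1 (max c M0) with hMdef
    have hMpos : (0:ℝ) < M := lt_of_lt_of_le one_pos (le_max_left _ _)
    have hM : ∀ t ≥ (1:ℝ), α t ≤ M * η t := by
      intro t ht
      have hηt := hηpos t ht
      rcases le_total T t with hc1 | hc1
      · have h1 := hTc t hc1
        rw [div_le_iff₀ hηt] at h1
        have hcM : c ≤ M := le_trans (le_max_left _ _) (le_max_right _ _)
        nlinarith
      · have htk : t ≤ bα ^ k := le_trans (le_trans hc1 (le_max_left T 1)) hk.le
        have htj : t ≤ bη ^ j := le_trans (le_trans hc1 (le_max_left T 1)) hj.le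
        have h1 := (hbα1 k t ht htk).2
        have h2 := (hbη1 j t ht htj).1
        have hM0M : M0 ≤ M := le_trans (le_max_right _ _) (le_max_right _ _)
        have hcηj : (0:ℝ) < cη ^ j := by positivity
        have hcαk : (0:ℝ) < cα ^ k := by positivity
        have h3 : α t ≤ M0 * η t := by
          rw [hM0]
          have h4 : η 1 / cη ^ j ≤ η t := by
            rw [div_eq_mul_inv, mul_comm, ← div_eq_inv_mul]
            exact h2
          calc α t ≤ cα ^ k * α 1 := h1
            _ = (cα ^ k * α 1) * (cη ^ j / η 1) * (η 1 / cη ^ j) := by field_simp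
            _ ≤ (cα ^ k * α 1) * (cη ^ j / η 1) * η t := by
                apply mul_le_mul_of_nonneg_left h4
                positivity
        nlinarith
    -- pointwise bound
    have hpt : ∀ (W : EuclideanSpace ℝ (Fin n) → ℂ) (ξ : EuclideanSpace ℝ (Fin n)),
        (wt α ξ) ^ 2 * ‖W ξ‖ ^ 2 ≤ M ^ 2 * ((wt η ξ) ^ 2 * ‖W ξ‖ ^ 2) := by
      intro W ξ
      have h1 := hM _ (hs_ge ξ)
      have h2 := hαpos _ (hs_ge ξ)
      have h3 := hηpos _ (hs_ge ξ)
      have e1 : wt α ξ = α (Real.sqrt (1 + ‖ξ‖ ^ 2)) := rfl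
      have e2 : wt η ξ = η (Real.sqrt (1 + ‖ξ‖ ^ 2)) := rfl
      rw [e1, e2]
      have h4 : α (Real.sqrt (1 + ‖ξ‖ ^ 2)) ^ 2 ≤ M ^ 2 * η (Real.sqrt (1 + ‖ξ‖ ^ 2)) ^ 2 := by
        have h5 := pow_le_pow_left₀ h2.le h1 2
        rwa [mul_pow] at h5
      calc α (Real.sqrt (1 + ‖ξ‖ ^ 2)) ^ 2 * ‖W ξ‖ ^ 2
          ≤ (M ^ 2 * η (Real.sqrt (1 + ‖ξ‖ ^ 2)) ^ 2) * ‖W ξ‖ ^ 2 :=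
            mul_le_mul_of_nonneg_right h4 (sq_nonneg _)
        _ = M ^ 2 * (η (Real.sqrt (1 + ‖ξ‖ ^ 2)) ^ 2 * ‖W ξ‖ ^ 2) := by ring
    have keyint : ∀ W : EuclideanSpace ℝ (Fin n) → ℂ, Measurable W →
        Integrable (fun ξ => (wt η ξ) ^ 2 * ‖W ξ‖ ^ 2) →
          Integrable (fun ξ => (wt α ξ) ^ 2 * ‖W ξ‖ ^ 2) := by
      intro W hWm hgint
      apply Integrable.mono' (hgint.const_mul (M ^ 2))
      · exact ((hwtα.pow_const 2).mul ((hWm.norm).pow_const 2)).aestronglyMeasurable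
      · apply ae_of_all
        intro ξ
        rw [Real.norm_eq_abs, abs_of_nonneg (by positivity)]
        exact hpt W ξ
    refine ⟨keyint, M ^ 2, by positivity, ?_⟩
    intro W hWm hgint
    calc ∫ ξ, (wt α ξ) ^ 2 * ‖W ξ‖ ^ 2
        ≤ ∫ ξ, M ^ 2 * ((wt η ξ) ^ 2 * ‖W ξ‖ ^ 2) := by
          apply integral_mono (keyint W hWm hgint) (hgint.const_mul (M ^ 2))
          intro ξ; exact hpt W ξ
      _ = M ^ 2 * ∫ ξ, (wt η ξ) ^ 2 * ‖W ξ‖ ^ 2 := integral_const_mul _ _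
end

section
/- Let α ∈ RO and let p ≥ 0 be an integer with n ≥ 1. If ∫₁^∞ t^{2p+n−1} α(t)^{−2} dt < ∞, then every w ∈ H^α(ℝⁿ) coincides almost everywhere with a function of class C^p on ℝⁿ, all of whose derivatives up to order p are bounded; moreover the embedding H^α(ℝⁿ) ↪ C^p_b(ℝⁿ) is continuous. -/
open MeasureTheory FourierTransform Module
open scoped ENNReal NNReal

/-- Cauchy–Schwarz for nonnegative integrable-square functions. -/
theorem my_cauchy_schwarz {X : Type*} [MeasurableSpace X] {μ : Measure X}
    {f g : X → ℝ} (hf : ∀ x, 0 ≤ f x) (hg : ∀ x, 0 ≤ g x)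
    (hfm : AEStronglyMeasurable f μ) (hgm : AEStronglyMeasurable g μ)
    (hf2 : Integrable (fun x => f x ^ 2) μ) (hg2 : Integrable (fun x => g x ^ 2) μ) :
    Integrable (fun x => f x * g x) μ ∧
      ∫ x, f x * g x ∂μ ≤ Real.sqrt (∫ x, f x ^ 2 ∂μ) * Real.sqrt (∫ x, g x ^ 2 ∂μ) := by
  have hmul : Integrable (fun x => f x * g x) μ := by
    refine Integrable.mono' ((hf2.add hg2).const_mul 2⁻¹) (hfm.mul hgm) ?_
    filter_upwards with x
    rw [Real.norm_of_nonneg (mul_nonneg (hf x) (hg x))]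
    simp only [Pi.add_apply]
    nlinarith [sq_nonneg (f x - g x)]
  refine ⟨hmul, ?_⟩
  set A := ∫ x, f x ^ 2 ∂μ with hA
  set B := ∫ x, f x * g x ∂μ with hB
  set Cc := ∫ x, g x ^ 2 ∂μ with hCc
  have hA0 : 0 ≤ A := integral_nonneg fun x => sq_nonneg _
  have hB0 : 0 ≤ B := integral_nonneg fun x => mul_nonneg (hf x) (hg x)
  have hC0 : 0 ≤ Cc := integral_nonneg fun x => sq_nonneg _
  have key : B ^ 2 ≤ A * Cc := by
    by_cases hC : Cc = 0
    · have hg0 : (fun x => g x ^ 2) =ᵐ[μ] 0 :=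
        (integral_eq_zero_iff_of_nonneg (fun x => sq_nonneg _) hg2).1
          (by rw [← hCc]; exact hC)
      have hfg0 : (fun x => f x * g x) =ᵐ[μ] 0 := by
        filter_upwards [hg0] with x hx
        have : g x = 0 := by
          have := hx
          simp only [Pi.zero_apply] at this
          nlinarith
        simp [this]
      have : B = 0 := by rw [hB, integral_congr_ae hfg0]; simp
      simp [this, hC]
    · have hCpos : 0 < Cc := lt_of_le_of_ne hC0 (Ne.symm hC)
      set l := B / Cc with hl
      have expand : ∫ x, (f x - l * g x) ^ 2 ∂μ = A - 2 * l * B + l ^ 2 * Cc := by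
        have h1 : ∀ x, (f x - l * g x) ^ 2
            = f x ^ 2 - (2 * l) * (f x * g x) + l ^ 2 * g x ^ 2 := by intro x; ring
        simp_rw [h1]
        have i2 : Integrable (fun x => 2 * l * (f x * g x)) μ := hmul.const_mul _
        have i3 : Integrable (fun x => l ^ 2 * g x ^ 2) μ := hg2.const_mul _
        have i1 : Integrable (fun x => f x ^ 2 - 2 * l * (f x * g x)) μ := hf2.sub i2
        rw [integral_add i1 i3, integral_sub hf2 i2, integral_const_mul, integral_const_mul]
      have h0 : 0 ≤ A - 2 * l * B + l ^ 2 * Cc := by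
        rw [← expand]; exact integral_nonneg fun x => sq_nonneg _
      rw [hl] at h0
      have h0' : 0 ≤ A - B ^ 2 / Cc := by
        have : B / Cc * B = B ^ 2 / Cc := by ring
        have h2 : (B / Cc) ^ 2 * Cc = B ^ 2 / Cc := by field_simp
        nlinarith [h0]
      nlinarith [mul_pos hCpos hCpos, h0', div_nonneg (sq_nonneg B) hC0,
        (div_le_iff₀ hCpos).1 (by linarith : B ^ 2 / Cc ≤ A)]
  calc B = Real.sqrt (B ^ 2) := (Real.sqrt_sq hB0).symm
    _ ≤ Real.sqrt (A * Cc) := Real.sqrt_le_sqrt key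
    _ = Real.sqrt A * Real.sqrt Cc := Real.sqrt_mul hA0 _

/-- Iterated RO bound. -/
theorem ro_pow_bound {α : ℝ → ℝ} {b c : ℝ} (hpos : ∀ t ≥ (1:ℝ), 0 < α t) (hb : 1 < b)
    (hc : 1 ≤ c)
    (hRO : ∀ t ≥ (1:ℝ), ∀ l ∈ Set.Icc (1:ℝ) b,
      c⁻¹ ≤ α (l * t) / α t ∧ α (l * t) / α t ≤ c) :
    ∀ m : ℕ, ∀ t ≥ (1:ℝ), ∀ l, 1 ≤ l → l ≤ b ^ m → α (l * t) ≤ c ^ m * α t := by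
  intro m
  induction m with
  | zero =>
      intro t ht l hl1 hl2
      have : l = 1 := le_antisymm (by simpa using hl2) hl1
      simp [this]
  | succ m ih =>
      intro t ht l hl1 hl2
      have hb0 : (0:ℝ) < b := lt_trans one_pos hb
      have hbm : (0:ℝ) < b ^ m := pow_pos hb0 m
      have hcm : (0:ℝ) < c ^ m := pow_pos (lt_of_lt_of_le one_pos hc) m
      by_cases h : l ≤ b ^ m
      · have h1 := ih t ht l hl1 h
        have h2 : c ^ m ≤ c ^ (m + 1) := pow_le_pow_right₀ hc (Nat.le_succ m)
        nlinarith [hpos t ht]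
      · push_neg at h
        have ht' : (1:ℝ) ≤ b ^ m * t :=
          one_le_mul_of_one_le_of_one_le (one_le_pow₀ hb.le) ht
        have hl' : l / b ^ m ∈ Set.Icc (1:ℝ) b := by
          constructor
          · rw [le_div_iff₀ hbm]; linarith
          · rw [div_le_iff₀ hbm]; rw [pow_succ] at hl2; linarith
        have key := (hRO (b ^ m * t) ht' (l / b ^ m) hl').2
        have hpt : 0 < α (b ^ m * t) := hpos _ ht'
        have heq : l / b ^ m * (b ^ m * t) = l * t := by field_simp
        rw [heq] at key
        have h1 : α (l * t) ≤ c * α (b ^ m * t) := by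
          rw [div_le_iff₀ hpt] at key; linarith
        have h2 : α (b ^ m * t) ≤ c ^ m * α t := ih t ht (b ^ m) (one_le_pow₀ hb.le) le_rfl
        have h3 : c * α (b ^ m * t) ≤ c * (c ^ m * α t) :=
          mul_le_mul_of_nonneg_left h2 (by linarith)
        calc α (l * t) ≤ c * (c ^ m * α t) := le_trans h1 h3
          _ = c ^ (m + 1) * α t := by ring

theorem weight_integrable (n p : ℕ) (hn : 0 < n) (α : ℝ → ℝ) (hmeas : Measurable α)
    (hpos : ∀ t ≥ (1:ℝ), 0 < α t) {b c : ℝ} (hb : 1 < b) (hc : 1 ≤ c)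
    (hRO : ∀ t ≥ (1:ℝ), ∀ l ∈ Set.Icc (1:ℝ) b,
      c⁻¹ ≤ α (l * t) / α t ∧ α (l * t) / α t ≤ c)
    (hint : IntegrableOn
      (fun t : ℝ => t ^ (2 * (p:ℝ) + n - 1) * ((α t)⁻¹) ^ 2) (Set.Ici 1)) :
    Integrable (fun ξ : EuclideanSpace ℝ (Fin n) =>
      (1 + ‖ξ‖ ^ 2) ^ p * ((α (Real.sqrt (1 + ‖ξ‖ ^ 2)))⁻¹) ^ 2) := by
  classical
  set E := EuclideanSpace ℝ (Fin n)
  set G : E → ℝ := fun ξ => (1 + ‖ξ‖ ^ 2) ^ p * ((α (Real.sqrt (1 + ‖ξ‖ ^ 2)))⁻¹) ^ 2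
    with hG
  obtain ⟨m, hm⟩ := pow_unbounded_of_one_lt (2:ℝ) hb
  set K : ℝ := c ^ (2 * m) with hK
  have hc0 : (0:ℝ) < c := lt_of_lt_of_le one_pos hc
  have hK1 : (1:ℝ) ≤ K := one_le_pow₀ hc
  have hK0 : (0:ℝ) < K := lt_of_lt_of_le one_pos hK1
  set hfun : ℝ → ℝ := fun t => t ^ (2 * p) * ((α t)⁻¹) ^ 2 with hhfun
  have hfun_nonneg : ∀ t, 0 ≤ hfun t := fun t => mul_nonneg ((even_two_mul p).pow_nonneg t) (sq_nonneg _)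
  -- key pointwise comparison
  have key : ∀ t₀ ≥ (1:ℝ), ∀ s, t₀ ≤ s → s ≤ 2 * t₀ → hfun t₀ ≤ K * hfun s := by
    intro t₀ ht₀ s hs1 hs2
    have ht₀0 : (0:ℝ) < t₀ := lt_of_lt_of_le one_pos ht₀
    have hαs : α s ≤ c ^ m * α t₀ := by
      have h2 := ro_pow_bound hpos hb hc hRO m t₀ ht₀ (s / t₀)
        ((one_le_div ht₀0).2 hs1) (by rw [div_le_iff₀ ht₀0]; nlinarith)
      rwa [div_mul_cancel₀ _ (ne_of_gt ht₀0)] at h2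
    have hαt₀ : 0 < α t₀ := hpos t₀ ht₀
    have hαspos : 0 < α s := hpos s (le_trans ht₀ hs1)
    have hcm : (0:ℝ) < c ^ m := pow_pos hc0 m
    have hsq : (α s) ^ 2 ≤ K * (α t₀) ^ 2 := by
      have h3 : (α s) ^ 2 ≤ (c ^ m * α t₀) ^ 2 := by nlinarith
      calc (α s) ^ 2 ≤ (c ^ m * α t₀) ^ 2 := h3
        _ = K * (α t₀) ^ 2 := by rw [hK, mul_pow, ← pow_mul, mul_comm m 2]
    have e1 : t₀ ^ (2 * p) ≤ s ^ (2 * p) := pow_le_pow_left₀ (le_of_lt ht₀0) hs1 _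
    have hA2 : (0:ℝ) < (α t₀) ^ 2 := by positivity
    have hB2 : (0:ℝ) < (α s) ^ 2 := by positivity
    rw [hhfun]
    simp only
    rw [inv_pow, inv_pow, ← div_eq_mul_inv, ← mul_assoc, ← div_eq_mul_inv,
      div_le_div_iff₀ hA2 hB2]
    calc t₀ ^ (2 * p) * (α s) ^ 2 ≤ s ^ (2 * p) * (K * (α t₀) ^ 2) :=
        mul_le_mul e1 hsq (sq_nonneg _) (pow_nonneg (by linarith) _)
      _ = K * s ^ (2 * p) * (α t₀) ^ 2 := by ring
  -- T
  set T : E → ℝ := fun ξ => Real.sqrt (1 + ‖ξ‖ ^ 2) with hT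
  have hT1 : ∀ ξ, 1 ≤ T ξ := by
    intro ξ
    rw [hT]
    simp only
    rw [show (1:ℝ) = Real.sqrt 1 from Real.sqrt_one.symm]
    exact Real.sqrt_le_sqrt (by rw [Real.sqrt_one]; nlinarith [sq_nonneg ‖ξ‖])
  have hTpos : ∀ ξ, 0 < T ξ := fun ξ => lt_of_lt_of_le one_pos (hT1 ξ)
  have hTsq : ∀ ξ, T ξ ^ 2 = 1 + ‖ξ‖ ^ 2 := fun ξ => Real.sq_sqrt (by positivity)
  have hTnorm : ∀ ξ, ‖ξ‖ < T ξ := by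
    intro ξ
    nlinarith [hTsq ξ, hTpos ξ, norm_nonneg ξ]
  have hTm : Measurable T :=
    (Continuous.sqrt (continuous_const.add (continuous_norm.pow 2))).measurable
  set H : ℝ → ℝ≥0∞ := fun t => ENNReal.ofReal (hfun t) with hH
  have Hmeas : Measurable H :=
    ((measurable_id.pow_const (2 * p)).mul ((hmeas.inv).pow_const 2)).ennreal_ofReal
  -- step 1
  have step1 : ∀ ξ : E, H (T ξ) ≤ ENNReal.ofReal K *
      ((ENNReal.ofReal (T ξ))⁻¹ * ∫⁻ t in Set.Ioc (T ξ) (2 * T ξ), H t) := by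
    intro ξ
    have ht₀ : 1 ≤ T ξ := hT1 ξ
    have ht₀0 : 0 < T ξ := hTpos ξ
    have lower : ENNReal.ofReal (K⁻¹ * hfun (T ξ)) * ENNReal.ofReal (T ξ)
        ≤ ∫⁻ t in Set.Ioc (T ξ) (2 * T ξ), H t := by
      have hpt : ∀ t ∈ Set.Ioc (T ξ) (2 * T ξ),
          ENNReal.ofReal (K⁻¹ * hfun (T ξ)) ≤ H t := by
        intro t ht
        apply ENNReal.ofReal_le_ofReal
        rw [inv_mul_le_iff₀ hK0]
        exact key (T ξ) ht₀ t (le_of_lt ht.1) ht.2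
      calc ENNReal.ofReal (K⁻¹ * hfun (T ξ)) * ENNReal.ofReal (T ξ)
          = ENNReal.ofReal (K⁻¹ * hfun (T ξ)) * volume (Set.Ioc (T ξ) (2 * T ξ)) := by
            rw [Real.volume_Ioc]
            congr 2
            ring
        _ = ∫⁻ _ in Set.Ioc (T ξ) (2 * T ξ), ENNReal.ofReal (K⁻¹ * hfun (T ξ)) :=
            (setLIntegral_const _ _).symm
        _ ≤ ∫⁻ t in Set.Ioc (T ξ) (2 * T ξ), H t := setLIntegral_mono Hmeas hpt
    have ht₀ne : ENNReal.ofReal (T ξ) ≠ 0 := by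
      simp only [ne_eq, ENNReal.ofReal_eq_zero, not_le]
      linarith
    have hKofReal : ENNReal.ofReal K * ENNReal.ofReal (K⁻¹ * hfun (T ξ)) = H (T ξ) := by
      rw [← ENNReal.ofReal_mul hK0.le, hH]
      congr 1
      field_simp
    calc H (T ξ) = ENNReal.ofReal K * ENNReal.ofReal (K⁻¹ * hfun (T ξ))
          * ((ENNReal.ofReal (T ξ))⁻¹ * ENNReal.ofReal (T ξ)) := by
          rw [ENNReal.inv_mul_cancel ht₀ne ENNReal.ofReal_ne_top, mul_one, hKofReal]
      _ = ENNReal.ofReal K * ((ENNReal.ofReal (T ξ))⁻¹ *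
            (ENNReal.ofReal (K⁻¹ * hfun (T ξ)) * ENNReal.ofReal (T ξ))) := by ring
      _ ≤ ENNReal.ofReal K *
            ((ENNReal.ofReal (T ξ))⁻¹ * ∫⁻ t in Set.Ioc (T ξ) (2 * T ξ), H t) := by
          gcongr
  -- the product set and function
  set S : Set (E × ℝ) := {q | T q.1 < q.2 ∧ q.2 ≤ 2 * T q.1} with hS
  have hSmeas : MeasurableSet S := by
    have h1 : MeasurableSet {q : E × ℝ | T q.1 < q.2} :=
      measurableSet_lt (hTm.comp measurable_fst) measurable_snd
    have h2 : MeasurableSet {q : E × ℝ | q.2 ≤ 2 * T q.1} :=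
      measurableSet_le measurable_snd ((hTm.comp measurable_fst).const_mul 2)
    exact h1.inter h2
  set F : E × ℝ → ℝ≥0∞ :=
    fun q => S.indicator (fun q => (ENNReal.ofReal (T q.1))⁻¹ * H q.2) q with hF
  have hFmeas : Measurable F :=
    (Measurable.mul (((hTm.comp measurable_fst).ennreal_ofReal).inv)
      (Hmeas.comp measurable_snd)).indicator hSmeas
  have repr : ∀ ξ : E, (ENNReal.ofReal (T ξ))⁻¹ * ∫⁻ t in Set.Ioc (T ξ) (2 * T ξ), H t
      = ∫⁻ t, F (ξ, t) := by
    intro ξ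
    have hinvtop : (ENNReal.ofReal (T ξ))⁻¹ ≠ ∞ := by
      rw [ENNReal.inv_ne_top]
      simp only [ne_eq, ENNReal.ofReal_eq_zero, not_le]
      linarith [hTpos ξ]
    rw [← lintegral_indicator measurableSet_Ioc, ← lintegral_const_mul' _ _ hinvtop]
    refine lintegral_congr fun t => ?_
    by_cases h : t ∈ Set.Ioc (T ξ) (2 * T ξ)
    · rw [Set.indicator_of_mem h]
      simp only [hF]
      have h' := Set.mem_Ioc.1 h
      have hmemS : (ξ, t) ∈ S := by
        rw [hS]
        simp only [Set.mem_setOf_eq]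
        exact ⟨h'.1, h'.2⟩
      exact (Set.indicator_of_mem hmemS (fun q => (ENNReal.ofReal (T q.1))⁻¹ * H q.2)).symm
    · rw [Set.indicator_of_notMem h, mul_zero]
      simp only [hF]
      have hnotS : (ξ, t) ∉ S := by
        rw [hS]
        simp only [Set.mem_setOf_eq]
        intro hc
        exact h (Set.mem_Ioc.2 ⟨hc.1, hc.2⟩)
      exact (Set.indicator_of_notMem hnotS (fun q => (ENNReal.ofReal (T q.1))⁻¹ * H q.2)).symm
  have swap : ∫⁻ ξ : E, ∫⁻ t : ℝ, F (ξ, t) = ∫⁻ t : ℝ, ∫⁻ ξ : E, F (ξ, t) :=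
    lintegral_lintegral_swap hFmeas.aemeasurable
  set vB := volume (Metric.ball (0:E) 1) with hvB
  have hvBtop : vB ≠ ∞ := measure_ball_lt_top.ne
  have inner_bound : ∀ t : ℝ, ∫⁻ ξ : E, F (ξ, t)
      ≤ (Set.Ioi (1:ℝ)).indicator
        (fun t => ENNReal.ofReal (2 * t ^ (n - 1)) * vB * H t) t := by
    intro t
    by_cases ht : 1 < t
    · rw [Set.indicator_of_mem (Set.mem_Ioi.2 ht)]
      have ht0 : (0:ℝ) < t := lt_trans one_pos ht
      have hb1 : ∀ ξ : E, F (ξ, t)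
          ≤ (Metric.ball (0:E) t).indicator (fun _ => ENNReal.ofReal (2 / t) * H t) ξ := by
        intro ξ
        by_cases hξ : (ξ, t) ∈ S
        · have h12 : T ξ < t ∧ t ≤ 2 * T ξ := hξ
          obtain ⟨h1, h2⟩ := h12
          have hmem : ξ ∈ Metric.ball (0:E) t := by
            rw [Metric.mem_ball, dist_zero_right]
            exact lt_trans (hTnorm ξ) h1
          simp only [hF]
          rw [Set.indicator_of_mem hξ, Set.indicator_of_mem hmem]
          apply mul_le_mul_left
          rw [← ENNReal.ofReal_inv_of_pos (hTpos ξ)]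
          apply ENNReal.ofReal_le_ofReal
          have h3 : t / 2 ≤ T ξ := by linarith
          have h4 : (T ξ)⁻¹ ≤ (t / 2)⁻¹ := by
            apply inv_anti₀ (by positivity) h3
          rwa [inv_div] at h4
        · simp only [hF]
          rw [Set.indicator_of_notMem hξ]
          exact zero_le
      calc ∫⁻ ξ : E, F (ξ, t)
          ≤ ∫⁻ ξ : E, (Metric.ball (0:E) t).indicator
              (fun _ => ENNReal.ofReal (2 / t) * H t) ξ := lintegral_mono hb1
        _ = ENNReal.ofReal (2 / t) * H t * volume (Metric.ball (0:E) t) := by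
            rw [lintegral_indicator measurableSet_ball, setLIntegral_const]
        _ = ENNReal.ofReal (2 * t ^ (n - 1)) * vB * H t := by
            rw [Measure.addHaar_ball_of_pos volume (0:E) ht0]
            have hrank : finrank ℝ E = n := finrank_euclideanSpace_fin
            rw [hrank]
            have hre : ENNReal.ofReal (2 / t) * ENNReal.ofReal (t ^ n)
                = ENNReal.ofReal (2 * t ^ (n - 1)) := by
              rw [← ENNReal.ofReal_mul (by positivity)]
              congr 1
              have hn' : n - 1 + 1 = n := Nat.succ_pred_eq_of_pos hn
              rw [← hn', pow_succ, Nat.add_sub_cancel, div_mul_eq_mul_div, mul_div_assoc,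
                mul_div_cancel_right₀ _ ht0.ne']
            rw [← hre]
            ring
    · rw [Set.indicator_of_notMem (by simpa using ht)]
      have hz : ∀ ξ : E, F (ξ, t) = 0 := by
        intro ξ
        simp only [hF]
        apply Set.indicator_of_notMem
        intro hmem
        obtain ⟨h1, -⟩ := hmem
        push_neg at ht
        linarith [hT1 ξ]
      simp only [hz, lintegral_const, zero_mul]
      exact zero_le
  -- final chain
  have hHG : ∀ ξ : E, ENNReal.ofReal (G ξ) = H (T ξ) := by
    intro ξ
    rw [hG, hH, hhfun]
    simp only
    rw [pow_mul, hTsq ξ]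
  have final : ∫⁻ ξ : E, ENNReal.ofReal (G ξ) < ∞ := by
    have e2 : ∀ t ∈ Set.Ioi (1:ℝ), ENNReal.ofReal (2 * t ^ (n - 1)) * vB * H t
        = 2 * vB * ENNReal.ofReal (t ^ (2 * (p:ℝ) + n - 1) * ((α t)⁻¹) ^ 2) := by
      intro t ht
      rw [Set.mem_Ioi] at ht
      have ht0 : (0:ℝ) < t := lt_trans one_pos ht
      have hexp : t ^ (2 * (p:ℝ) + n - 1) = t ^ (2 * p + (n - 1)) := by
        rw [← Real.rpow_natCast t (2 * p + (n - 1))]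
        congr 1
        push_cast [Nat.cast_sub (by omega : 1 ≤ n)]
        ring
      rw [hexp, hH, hhfun]
      simp only
      have c1 : (2 * t ^ (n - 1)) * (t ^ (2 * p) * ((α t)⁻¹) ^ 2)
          = 2 * (t ^ (2 * p + (n - 1)) * ((α t)⁻¹) ^ 2) := by
        rw [pow_add]
        ring
      have c2 : ENNReal.ofReal (2 * t ^ (n - 1))
            * ENNReal.ofReal (t ^ (2 * p) * ((α t)⁻¹) ^ 2)
          = ENNReal.ofReal (2 * (t ^ (2 * p + (n - 1)) * ((α t)⁻¹) ^ 2)) := by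
        rw [← ENNReal.ofReal_mul (by positivity), c1]
      calc ENNReal.ofReal (2 * t ^ (n - 1)) * vB
            * ENNReal.ofReal (t ^ (2 * p) * ((α t)⁻¹) ^ 2)
          = (ENNReal.ofReal (2 * t ^ (n - 1))
              * ENNReal.ofReal (t ^ (2 * p) * ((α t)⁻¹) ^ 2)) * vB := by ring
        _ = ENNReal.ofReal (2 * (t ^ (2 * p + (n - 1)) * ((α t)⁻¹) ^ 2)) * vB := by rw [c2]
        _ = 2 * vB * ENNReal.ofReal (t ^ (2 * p + (n - 1)) * ((α t)⁻¹) ^ 2) := by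
            rw [ENNReal.ofReal_mul (by norm_num : (0:ℝ) ≤ 2), ENNReal.ofReal_ofNat]
            ring
    have hfin : ∫⁻ t in Set.Ici (1:ℝ),
        ENNReal.ofReal (t ^ (2 * (p:ℝ) + n - 1) * ((α t)⁻¹) ^ 2) < ∞ :=
      hint.setLIntegral_lt_top
    calc ∫⁻ ξ : E, ENNReal.ofReal (G ξ) = ∫⁻ ξ : E, H (T ξ) := lintegral_congr hHG
      _ ≤ ∫⁻ ξ : E, ENNReal.ofReal K *
            ((ENNReal.ofReal (T ξ))⁻¹ * ∫⁻ t in Set.Ioc (T ξ) (2 * T ξ), H t) :=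
          lintegral_mono step1
      _ = ENNReal.ofReal K * ∫⁻ ξ : E,
            ((ENNReal.ofReal (T ξ))⁻¹ * ∫⁻ t in Set.Ioc (T ξ) (2 * T ξ), H t) :=
          lintegral_const_mul' _ _ ENNReal.ofReal_ne_top
      _ = ENNReal.ofReal K * ∫⁻ ξ : E, ∫⁻ t : ℝ, F (ξ, t) := by
          rw [lintegral_congr repr]
      _ = ENNReal.ofReal K * ∫⁻ t : ℝ, ∫⁻ ξ : E, F (ξ, t) := by rw [swap]
      _ ≤ ENNReal.ofReal K * ∫⁻ t : ℝ, (Set.Ioi (1:ℝ)).indicator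
            (fun t => ENNReal.ofReal (2 * t ^ (n - 1)) * vB * H t) t :=
          mul_le_mul_right (lintegral_mono inner_bound) _
      _ = ENNReal.ofReal K * ∫⁻ t in Set.Ioi (1:ℝ),
            ENNReal.ofReal (2 * t ^ (n - 1)) * vB * H t := by
          rw [lintegral_indicator measurableSet_Ioi]
      _ = ENNReal.ofReal K * (2 * vB * ∫⁻ t in Set.Ioi (1:ℝ),
            ENNReal.ofReal (t ^ (2 * (p:ℝ) + n - 1) * ((α t)⁻¹) ^ 2)) := by
          rw [setLIntegral_congr_fun measurableSet_Ioi e2,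
            lintegral_const_mul' _ _ (by finiteness)]
      _ ≤ ENNReal.ofReal K * (2 * vB * ∫⁻ t in Set.Ici (1:ℝ),
            ENNReal.ofReal (t ^ (2 * (p:ℝ) + n - 1) * ((α t)⁻¹) ^ 2)) := by
          gcongr
          exact Set.Ioi_subset_Ici_self
      _ < ∞ := by
          apply ENNReal.mul_lt_top ENNReal.ofReal_lt_top
          apply ENNReal.mul_lt_top _ hfin
          exact ENNReal.mul_lt_top (by norm_num) hvBtop.lt_top
  have hGmeas : Measurable G := by
    apply Measurable.mul
    · exact (measurable_const.add ((measurable_norm).pow_const 2)).pow_const p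
    · exact ((hmeas.comp hTm).inv).pow_const 2
  refine ⟨hGmeas.aestronglyMeasurable, ?_⟩
  rw [hasFiniteIntegral_iff_ofReal (Filter.Eventually.of_forall fun ξ => ?_)]
  · exact final
  · exact mul_nonneg (by positivity) (sq_nonneg _)


/-- Hörmander's embedding theorem `H^α(ℝⁿ) ↪ C^p_b(ℝⁿ)`. If
`∫₁^∞ t^{2p+n−1} α(t)^{−2} dt < ∞`, then every element of `H^α(ℝⁿ)` (given on the Fourier
side by `W = ŵ`) has the `C^p` representative `w = 𝓕⁻ W`, whose derivatives up to order `p`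
are bounded, with a bound `C` independent of `W` (continuity of the embedding). -/
theorem hormander_embedding_Cp (n p : ℕ) (hn : 0 < n) (α : ℝ → ℝ) (hα : RO α)
    (hint : IntegrableOn
      (fun t : ℝ => t ^ (2 * (p:ℝ) + n - 1) * ((α t)⁻¹) ^ 2) (Set.Ici 1)) :
    ∃ C > (0:ℝ), ∀ W : EuclideanSpace ℝ (Fin n) → ℂ, Measurable W →
      Integrable (fun ξ => (wt α ξ) ^ 2 * ‖W ξ‖ ^ 2) →
        ContDiff ℝ p (𝓕⁻ W) ∧
        ∀ k ≤ p, ∀ x : EuclideanSpace ℝ (Fin n),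
          ‖iteratedFDeriv ℝ k (𝓕⁻ W) x‖ ≤
            C * Real.sqrt (∫ ξ, (wt α ξ) ^ 2 * ‖W ξ‖ ^ 2) := by
  obtain ⟨hmeas, hpos, b, hb, c, hc, hRO⟩ := hα
  have hG : Integrable (fun ξ : EuclideanSpace ℝ (Fin n) =>
      (1 + ‖ξ‖ ^ 2) ^ p * ((α (Real.sqrt (1 + ‖ξ‖ ^ 2)))⁻¹) ^ 2) :=
    weight_integrable n p hn α hmeas hpos hb hc hRO hint
  set A := ∫ ξ : EuclideanSpace ℝ (Fin n),
      (1 + ‖ξ‖ ^ 2) ^ p * ((α (Real.sqrt (1 + ‖ξ‖ ^ 2)))⁻¹) ^ 2 with hA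
  have hA0 : 0 ≤ A :=
    integral_nonneg fun ξ => mul_nonneg (by positivity) (sq_nonneg _)
  refine ⟨(2 * Real.pi) ^ p * (Real.sqrt A + 1), by positivity, ?_⟩
  intro W hWmeas hW2
  have hT1 : ∀ ξ : EuclideanSpace ℝ (Fin n), 1 ≤ Real.sqrt (1 + ‖ξ‖ ^ 2) := by
    intro ξ
    rw [show (1:ℝ) = Real.sqrt 1 from Real.sqrt_one.symm]
    exact Real.sqrt_le_sqrt (by rw [Real.sqrt_one]; nlinarith [sq_nonneg ‖ξ‖])
  have hTle : ∀ ξ : EuclideanSpace ℝ (Fin n), ‖ξ‖ ≤ Real.sqrt (1 + ‖ξ‖ ^ 2) := by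
    intro ξ
    have h1 : Real.sqrt (1 + ‖ξ‖ ^ 2) ^ 2 = 1 + ‖ξ‖ ^ 2 := Real.sq_sqrt (by positivity)
    nlinarith [Real.sqrt_nonneg (1 + ‖ξ‖ ^ 2), norm_nonneg ξ]
  have hwt : ∀ ξ : EuclideanSpace ℝ (Fin n), 0 < wt α ξ := fun ξ => hpos _ (hT1 ξ)
  set g₁ : EuclideanSpace ℝ (Fin n) → ℝ :=
    fun ξ => Real.sqrt (1 + ‖ξ‖ ^ 2) ^ p * (wt α ξ)⁻¹ with hg₁
  set g₂ : EuclideanSpace ℝ (Fin n) → ℝ := fun ξ => wt α ξ * ‖W ξ‖ with hg₂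
  have hg₁sq : (fun ξ : EuclideanSpace ℝ (Fin n) => g₁ ξ ^ 2)
      = fun ξ => (1 + ‖ξ‖ ^ 2) ^ p * ((α (Real.sqrt (1 + ‖ξ‖ ^ 2)))⁻¹) ^ 2 := by
    funext ξ
    rw [hg₁]
    simp only [wt]
    rw [mul_pow, ← pow_mul, mul_comm p 2, pow_mul, Real.sq_sqrt (by positivity : (0:ℝ) ≤ 1 + ‖ξ‖ ^ 2)]
  have hg₂sq : (fun ξ : EuclideanSpace ℝ (Fin n) => g₂ ξ ^ 2)
      = fun ξ => wt α ξ ^ 2 * ‖W ξ‖ ^ 2 := by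
    funext ξ
    rw [hg₂]
    simp only [mul_pow]
  have hG2 : Integrable (fun ξ : EuclideanSpace ℝ (Fin n) => g₁ ξ ^ 2) := by
    rw [hg₁sq]; exact hG
  have hG2' : Integrable (fun ξ : EuclideanSpace ℝ (Fin n) => g₂ ξ ^ 2) := by
    rw [hg₂sq]; exact hW2
  have hwtm : Measurable fun ξ : EuclideanSpace ℝ (Fin n) => wt α ξ := by
    apply hmeas.comp
    exact (Continuous.sqrt (continuous_const.add (continuous_norm.pow 2))).measurable
  have hg₁m : AEStronglyMeasurable g₁ volume := by
    apply Measurable.aestronglyMeasurable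
    exact (((Continuous.sqrt (continuous_const.add
      (continuous_norm.pow 2))).measurable).pow_const p).mul hwtm.inv
  have hg₂m : AEStronglyMeasurable g₂ volume :=
    (hwtm.mul hWmeas.norm).aestronglyMeasurable
  obtain ⟨hint12, hCS⟩ := my_cauchy_schwarz
    (fun ξ => mul_nonneg (pow_nonneg (Real.sqrt_nonneg _) p) (inv_nonneg.2 (hwt ξ).le))
    (fun ξ => mul_nonneg (hwt ξ).le (norm_nonneg _)) hg₁m hg₂m hG2 hG2'
  have hptw : ∀ k : ℕ, k ≤ p → ∀ ξ : EuclideanSpace ℝ (Fin n),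
      ‖ξ‖ ^ k * ‖W ξ‖ ≤ g₁ ξ * g₂ ξ := by
    intro k hk ξ
    have h1 : ‖ξ‖ ^ k ≤ Real.sqrt (1 + ‖ξ‖ ^ 2) ^ p :=
      calc ‖ξ‖ ^ k ≤ Real.sqrt (1 + ‖ξ‖ ^ 2) ^ k :=
            pow_le_pow_left₀ (norm_nonneg _) (hTle ξ) k
        _ ≤ Real.sqrt (1 + ‖ξ‖ ^ 2) ^ p := pow_le_pow_right₀ (hT1 ξ) hk
    have h2 : g₁ ξ * g₂ ξ = Real.sqrt (1 + ‖ξ‖ ^ 2) ^ p * ‖W ξ‖ := by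
      have hw : wt α ξ ≠ 0 := (hwt ξ).ne'
      rw [hg₁, hg₂]
      calc Real.sqrt (1 + ‖ξ‖ ^ 2) ^ p * (wt α ξ)⁻¹ * (wt α ξ * ‖W ξ‖)
          = Real.sqrt (1 + ‖ξ‖ ^ 2) ^ p * ((wt α ξ)⁻¹ * wt α ξ) * ‖W ξ‖ := by ring
        _ = Real.sqrt (1 + ‖ξ‖ ^ 2) ^ p * ‖W ξ‖ := by
            rw [inv_mul_cancel₀ hw, mul_one]
    rw [h2]
    exact mul_le_mul_of_nonneg_right h1 (norm_nonneg _)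
  have hIk : ∀ k : ℕ, k ≤ p →
      Integrable (fun ξ : EuclideanSpace ℝ (Fin n) => ‖ξ‖ ^ k * ‖W ξ‖) := by
    intro k hk
    refine hint12.mono'
      (((measurable_norm.pow_const k).mul hWmeas.norm).aestronglyMeasurable) ?_
    filter_upwards with ξ
    rw [Real.norm_of_nonneg (mul_nonneg (by positivity) (norm_nonneg _))]
    exact hptw k hk ξ
  have hIbound : ∀ k : ℕ, k ≤ p →
      ∫ ξ : EuclideanSpace ℝ (Fin n), ‖ξ‖ ^ k * ‖W ξ‖
        ≤ Real.sqrt A * Real.sqrt (∫ ξ, wt α ξ ^ 2 * ‖W ξ‖ ^ 2) := by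
    intro k hk
    calc ∫ ξ : EuclideanSpace ℝ (Fin n), ‖ξ‖ ^ k * ‖W ξ‖
        ≤ ∫ ξ, g₁ ξ * g₂ ξ := integral_mono (hIk k hk) hint12 (hptw k hk)
      _ ≤ Real.sqrt (∫ ξ, g₁ ξ ^ 2) * Real.sqrt (∫ ξ, g₂ ξ ^ 2) := hCS
      _ = Real.sqrt A * Real.sqrt (∫ ξ, wt α ξ ^ 2 * ‖W ξ‖ ^ 2) := by
          rw [hg₁sq, hg₂sq, hA]
  have hIg : ∀ k : ℕ, (k : ℕ∞) ≤ (p : ℕ∞) →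
      Integrable (fun v : EuclideanSpace ℝ (Fin n) => ‖v‖ ^ k * ‖W (-v)‖) := by
    intro k hk
    have hk' : k ≤ p := by exact_mod_cast hk
    have h := (hIk k hk').comp_neg
    simpa using h
  rw [Real.fourierInv_eq_fourier_comp_neg]
  constructor
  · exact_mod_cast Real.contDiff_fourier (N := (p : ℕ∞)) (fun k hk => hIg k hk)
  · intro k hk x
    have hkc : (k : ℕ∞) ≤ (p : ℕ∞) := by exact_mod_cast hk
    rw [Real.iteratedFDeriv_fourier (fun i hi => hIg i hi)
      ((hWmeas.comp measurable_neg).aestronglyMeasurable) hkc]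
    have hLnorm : (2 * Real.pi * ‖innerSL ℝ (E := EuclideanSpace ℝ (Fin n))‖) ^ k
        ≤ (2 * Real.pi) ^ k := by
      apply pow_le_pow_left₀ (by positivity)
      nlinarith [norm_innerSL_le (𝕜 := ℝ) (E := EuclideanSpace ℝ (Fin n)), Real.pi_pos]
    calc ‖(𝓕 fun v => VectorFourier.fourierPowSMulRight (innerSL ℝ) (fun x => W (-x)) v k) x‖
        ≤ ∫ v, ‖VectorFourier.fourierPowSMulRight (innerSL ℝ) (fun x => W (-x)) v k‖ :=
          VectorFourier.norm_fourierIntegral_le_integral_norm _ _ _ _ _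
      _ ≤ ∫ v : EuclideanSpace ℝ (Fin n), (2 * Real.pi) ^ k * (‖v‖ ^ k * ‖W (-v)‖) := by
          apply integral_mono_of_nonneg (Filter.Eventually.of_forall fun v => norm_nonneg _)
            ((hIg k hkc).const_mul _)
          filter_upwards with v
          refine le_trans (VectorFourier.norm_fourierPowSMulRight_le _ _ _ _) ?_
          calc (2 * Real.pi * ‖innerSL ℝ (E := EuclideanSpace ℝ (Fin n))‖) ^ k
                * ‖v‖ ^ k * ‖W (-v)‖
              ≤ (2 * Real.pi) ^ k * ‖v‖ ^ k * ‖W (-v)‖ := by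
                apply mul_le_mul_of_nonneg_right
                  (mul_le_mul_of_nonneg_right hLnorm (by positivity)) (norm_nonneg _)
            _ = (2 * Real.pi) ^ k * (‖v‖ ^ k * ‖W (-v)‖) := by ring
      _ = (2 * Real.pi) ^ k * ∫ v : EuclideanSpace ℝ (Fin n), ‖v‖ ^ k * ‖W (-v)‖ :=
          integral_const_mul _ _
      _ = (2 * Real.pi) ^ k * ∫ v : EuclideanSpace ℝ (Fin n), ‖v‖ ^ k * ‖W v‖ := by
          congr 1
          have h := integral_neg_eq_self
            (fun v : EuclideanSpace ℝ (Fin n) => ‖v‖ ^ k * ‖W v‖) volume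
          simpa using h
      _ ≤ (2 * Real.pi) ^ k
            * (Real.sqrt A * Real.sqrt (∫ ξ, wt α ξ ^ 2 * ‖W ξ‖ ^ 2)) :=
          mul_le_mul_of_nonneg_left (hIbound k hk) (by positivity)
      _ ≤ (2 * Real.pi) ^ p * (Real.sqrt A + 1)
            * Real.sqrt (∫ ξ, wt α ξ ^ 2 * ‖W ξ‖ ^ 2) := by
          have h2pi : (1:ℝ) ≤ 2 * Real.pi := by nlinarith [Real.pi_gt_three]
          have hk2 : (2 * Real.pi) ^ k ≤ (2 * Real.pi) ^ p := pow_le_pow_right₀ h2pi hk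
          have hs : 0 ≤ Real.sqrt (∫ ξ, wt α ξ ^ 2 * ‖W ξ‖ ^ 2) := Real.sqrt_nonneg _
          have hsA : 0 ≤ Real.sqrt A := Real.sqrt_nonneg _
          have hp0 : (0:ℝ) ≤ (2 * Real.pi) ^ k := by positivity
          have hstep : (2 * Real.pi) ^ k * Real.sqrt A
              ≤ (2 * Real.pi) ^ p * (Real.sqrt A + 1) := by nlinarith
          calc (2 * Real.pi) ^ k
                * (Real.sqrt A * Real.sqrt (∫ ξ, wt α ξ ^ 2 * ‖W ξ‖ ^ 2))
              = ((2 * Real.pi) ^ k * Real.sqrt A)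
                * Real.sqrt (∫ ξ, wt α ξ ^ 2 * ‖W ξ‖ ^ 2) := by ring
            _ ≤ (2 * Real.pi) ^ p * (Real.sqrt A + 1)
                * Real.sqrt (∫ ξ, wt α ξ ^ 2 * ‖W ξ‖ ^ 2) :=
              mul_le_mul_of_nonneg_right hstep hs
end

section
/- Let α ∈ RO and let s₀ < σ₀(α) and s₁ > σ₁(α). Define ψ(t) := t^{−s₀/(s₁−s₀)} α(t^{1/(s₁−s₀)}) for t ≥ 1 and ψ(t) := α(1) for 0 < t < 1. Then ψ belongs to the class 𝓑 (i.e., ψ is Borel measurable, positive, bounded on each compact interval [a,b] ⊂ (0,∞), and 1/ψ is bounded on each [r,∞) with r > 0) and ψ is pseudoconcave in a neighborhood of +∞. -/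
/-- The class `𝓑`: Borel measurable positive functions on `(0,∞)`, bounded on compact
subintervals, with `1/ψ` bounded on each `[r,∞)`, `r > 0`. -/
def ClassB (ψ : ℝ → ℝ) : Prop :=
  Measurable ψ ∧ (∀ t > (0:ℝ), 0 < ψ t) ∧
    (∀ a b : ℝ, 0 < a → a ≤ b → ∃ M : ℝ, ∀ t ∈ Set.Icc a b, ψ t ≤ M) ∧
    (∀ r > (0:ℝ), ∃ M : ℝ, ∀ t ≥ r, (ψ t)⁻¹ ≤ M)

/-- The interpolation parameter of formula (20):
`ψ(t) = t^{−s₀/(s₁−s₀)} α(t^{1/(s₁−s₀)})` for `t ≥ 1`, `ψ(t) = α(1)` for `0 < t < 1`. -/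
noncomputable def psiInterp (α : ℝ → ℝ) (s₀ s₁ : ℝ) : ℝ → ℝ := fun t =>
  if 1 ≤ t then t ^ (-s₀ / (s₁ - s₀)) * α (t ^ ((1:ℝ) / (s₁ - s₀))) else α 1

open Real Set

lemma RO.pow_bound {α : ℝ → ℝ} (hα : RO α) :
    ∃ s : ℝ, ∃ c ≥ (1:ℝ), ∀ t ≥ (1:ℝ), ∀ l ≥ (1:ℝ),
      α (l * t) ≤ c * l ^ s * α t ∧ α t ≤ c * l ^ s * α (l * t) := by
  obtain ⟨_, hpos, b, hb, c, hc, H⟩ := hα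
  have hb0 : (0:ℝ) < b := by linarith
  have hc0 : (0:ℝ) < c := by linarith
  have key : ∀ n : ℕ, ∀ t ≥ (1:ℝ), ∀ l, 1 ≤ l → l ≤ b ^ n →
      α (l * t) ≤ c ^ n * α t ∧ α t ≤ c ^ n * α (l * t) := by
    intro n
    induction n with
    | zero =>
      intro t ht l hl1 hl2
      simp only [pow_zero] at hl2 ⊢
      have : l = 1 := le_antisymm hl2 hl1
      subst this
      simp
    | succ n ih =>
      intro t ht l hl1 hl2
      by_cases hcase : l ≤ b ^ n
      · obtain ⟨h1, h2⟩ := ih t ht l hl1 hcase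
        have hpown : c ^ n ≤ c ^ (n+1) := by
          calc c ^ n = 1 * c ^ n := by ring
          _ ≤ c * c ^ n := by gcongr
          _ = c ^ (n+1) := by ring
        have hαt : 0 < α t := hpos t ht
        have hαlt : 0 < α (l * t) :=
          hpos (l*t) (le_trans ht (le_mul_of_one_le_left (by linarith) hl1))
        exact ⟨h1.trans (by gcongr), h2.trans (by gcongr)⟩
      · push_neg at hcase
        have hbn : (0:ℝ) < b ^ n := pow_pos hb0 n
        have hbn1 : (1:ℝ) ≤ b ^ n := one_le_pow₀ (le_of_lt hb)
        have ht' : (1:ℝ) ≤ b ^ n * t := by nlinarith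
        have hl' : l / b ^ n ∈ Set.Icc (1:ℝ) b := by
          constructor
          · rw [le_div_iff₀ hbn]; linarith [hcase.le]
          · rw [div_le_iff₀ hbn]; calc l ≤ b ^ (n+1) := hl2
              _ = b * b ^ n := by ring
        obtain ⟨hlo, hhi⟩ := H (b ^ n * t) ht' (l / b ^ n) hl'
        have heq : l / b ^ n * (b ^ n * t) = l * t := by field_simp
        rw [heq] at hlo hhi
        have hαbt : 0 < α (b ^ n * t) := hpos _ ht'
        have hαt : 0 < α t := hpos t ht
        have hαlt : 0 < α (l * t) := hpos (l*t) (by nlinarith)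
        obtain ⟨i1, i2⟩ := ih t ht (b ^ n) hbn1 le_rfl
        have hcn : (0:ℝ) < c ^ n := pow_pos hc0 n
        constructor
        · have u1 : α (l * t) ≤ c * α (b ^ n * t) := by
            rw [div_le_iff₀ hαbt] at hhi; linarith
          calc α (l * t) ≤ c * α (b ^ n * t) := u1
            _ ≤ c * (c ^ n * α t) := by gcongr
            _ = c ^ (n+1) * α t := by ring
        · have u2 : α (b ^ n * t) ≤ c * α (l * t) := by
            rw [le_div_iff₀ hαbt, inv_mul_le_iff₀ hc0] at hlo
            exact hlo
          calc α t ≤ c ^ n * α (b ^ n * t) := i2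
            _ ≤ c ^ n * (c * α (l * t)) := by gcongr
            _ = c ^ (n+1) * α (l * t) := by ring
  refine ⟨Real.logb b c, c, hc, fun t ht l hl => ?_⟩
  set n : ℕ := ⌈Real.logb b l⌉₊ with hn
  have hl0 : (0:ℝ) < l := by linarith
  have hlogb0 : 0 ≤ Real.logb b l := Real.logb_nonneg hb hl
  have hlbn : l ≤ b ^ n := by
    have h1 : Real.logb b l ≤ (n : ℝ) := Nat.le_ceil _
    have := Real.rpow_le_rpow_of_exponent_le hb.le h1
    rw [Real.rpow_logb hb0 (ne_of_gt hb) hl0, Real.rpow_natCast] at this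
    exact this
  have hcn : c ^ n ≤ c * l ^ Real.logb b c := by
    have h1 : (n : ℝ) ≤ Real.logb b l + 1 := (Nat.ceil_lt_add_one hlogb0).le
    have h2 : (c:ℝ) ^ (n:ℝ) ≤ c ^ (Real.logb b l + 1) :=
      Real.rpow_le_rpow_of_exponent_le hc h1
    rw [Real.rpow_natCast] at h2
    refine h2.trans_eq ?_
    rw [Real.rpow_add hc0, Real.rpow_one]
    have : c ^ Real.logb b l = l ^ Real.logb b c := by
      rw [Real.rpow_def_of_pos hc0, Real.rpow_def_of_pos hl0, Real.logb, Real.logb]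
      ring_nf
    rw [this]; ring
  obtain ⟨k1, k2⟩ := key n t ht l hl hlbn
  have hαt : 0 < α t := hpos t ht
  have hαlt : 0 < α (l * t) := hpos (l*t) (by nlinarith)
  exact ⟨k1.trans (by gcongr), k2.trans (by gcongr)⟩

lemma psi_bounds (α : ℝ → ℝ) (hpos : ∀ t ≥ (1:ℝ), 0 < α t)
    (s₀ s₁ p q cp cq : ℝ) (hcp : 0 < cp) (hcq : 0 < cq)
    (hp : ∀ t ≥ (1:ℝ), ∀ l ≥ (1:ℝ), cp * l ^ p ≤ α (l * t) / α t)
    (hq : ∀ t ≥ (1:ℝ), ∀ l ≥ (1:ℝ), α (l * t) / α t ≤ cq * l ^ q)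
    (hs0 : s₀ < p) (hs1 : q < s₁) (hpq : p ≤ q) :
    ∀ t ≥ (1:ℝ), ∀ l ≥ (1:ℝ),
      cp * psiInterp α s₀ s₁ t ≤ psiInterp α s₀ s₁ (l * t) ∧
      psiInterp α s₀ s₁ (l * t) ≤ cq * l ^ ((q - s₀)/(s₁ - s₀)) * psiInterp α s₀ s₁ t := by
  intro t ht l hl
  have hδ : (0:ℝ) < s₁ - s₀ := by linarith
  have ht0 : (0:ℝ) < t := by linarith
  have hl0 : (0:ℝ) < l := by linarith
  have hlt1 : (1:ℝ) ≤ l * t := by nlinarith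
  set e : ℝ := 1 / (s₁ - s₀) with he
  set m : ℝ := -s₀ / (s₁ - s₀) with hm
  have he0 : 0 < e := by positivity
  have hte : (1:ℝ) ≤ t ^ e := Real.one_le_rpow ht he0.le
  have hle : (1:ℝ) ≤ l ^ e := Real.one_le_rpow hl he0.le
  have hαte : 0 < α (t ^ e) := hpos _ hte
  have hαlte : 0 < α (l ^ e * t ^ e) := hpos _ (by nlinarith)
  have hψt : psiInterp α s₀ s₁ t = t ^ m * α (t ^ e) := by
    simp only [psiInterp]; rw [if_pos ht]
  have hsplit : (l * t) ^ e = l ^ e * t ^ e := Real.mul_rpow hl0.le ht0.le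
  have hψlt : psiInterp α s₀ s₁ (l * t) = l ^ m * t ^ m * α (l ^ e * t ^ e) := by
    simp only [psiInterp]; rw [if_pos hlt1, hsplit, Real.mul_rpow hl0.le ht0.le]
  have hlow := hp (t ^ e) hte (l ^ e) hle
  have hhigh := hq (t ^ e) hte (l ^ e) hle
  rw [le_div_iff₀ hαte] at hlow
  rw [div_le_iff₀ hαte] at hhigh
  have hlep : (l ^ e) ^ p = l ^ (e * p) := (Real.rpow_mul hl0.le e p).symm
  have hleq : (l ^ e) ^ q = l ^ (e * q) := (Real.rpow_mul hl0.le e q).symm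
  rw [hlep] at hlow
  rw [hleq] at hhigh
  have htm0 : 0 < t ^ m := Real.rpow_pos_of_pos ht0 m
  have hlm0 : 0 < l ^ m := Real.rpow_pos_of_pos hl0 m
  have hmadd : ∀ x : ℝ, l ^ m * l ^ (e * x) = l ^ ((x - s₀)/(s₁ - s₀)) := by
    intro x
    rw [← Real.rpow_add hl0]
    congr 1
    rw [hm, he]; field_simp; ring
  constructor
  · have h1 : l ^ m * t ^ m * (cp * l ^ (e * p) * α (t ^ e)) ≤
        l ^ m * t ^ m * α (l ^ e * t ^ e) :=
      mul_le_mul_of_nonneg_left hlow (by positivity)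
    have h2 : l ^ m * t ^ m * (cp * l ^ (e * p) * α (t ^ e)) =
        cp * l ^ ((p - s₀)/(s₁-s₀)) * (t ^ m * α (t ^ e)) := by
      rw [← hmadd p]; ring
    have h3 : (1:ℝ) ≤ l ^ ((p - s₀)/(s₁-s₀)) :=
      Real.one_le_rpow hl (div_nonneg (by linarith) hδ.le)
    have h4 : cp * (t ^ m * α (t ^ e)) ≤
        cp * l ^ ((p - s₀)/(s₁-s₀)) * (t ^ m * α (t ^ e)) := by
      have hx := mul_pos htm0 hαte
      nlinarith [mul_nonneg (mul_pos hcp hx).le (sub_nonneg.2 h3)]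
    rw [hψlt, hψt]
    linarith [h1, h2.le, h2.ge, h4]
  · have h1 : l ^ m * t ^ m * α (l ^ e * t ^ e) ≤
        l ^ m * t ^ m * (cq * l ^ (e * q) * α (t ^ e)) :=
      mul_le_mul_of_nonneg_left hhigh (by positivity)
    have h2 : l ^ m * t ^ m * (cq * l ^ (e * q) * α (t ^ e)) =
        cq * l ^ ((q - s₀)/(s₁-s₀)) * (t ^ m * α (t ^ e)) := by
      rw [← hmadd q]; ring
    rw [hψlt, hψt]
    linarith [h1, h2.le, h2.ge]

/-- for `α ∈ RO`, `s₀ < σ₀(α)`, `s₁ > σ₁(α)`, the function `ψ` of formula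
(20) belongs to the class `𝓑` and is pseudoconcave in a neighborhood of `+∞`. -/
theorem psiInterp_mem_B_and_pseudoconcave (α : ℝ → ℝ) (hα : RO α) (s₀ s₁ : ℝ)
    (h0 : s₀ < sigma0 α) (h1 : sigma1 α < s₁) :
    ClassB (psiInterp α s₀ s₁) ∧
    ∃ b : ℝ, 1 ≤ b ∧ ∃ ψ₁ : ℝ → ℝ, ConcaveOn ℝ (Set.Ioi b) ψ₁ ∧
      (∀ t > b, 0 < ψ₁ t) ∧ ∃ M > (0:ℝ), ∀ t > b,
        psiInterp α s₀ s₁ t ≤ M * ψ₁ t ∧ ψ₁ t ≤ M * psiInterp α s₀ s₁ t := by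
  obtain ⟨s, c, hc, hbd⟩ := hα.pow_bound
  obtain ⟨hmeas, hpos, _⟩ := hα
  have hc0 : (0:ℝ) < c := by linarith
  -- membership in the index sets
  have hS1mem : s ∈ {s : ℝ | ∃ c > (0:ℝ), ∀ t ≥ (1:ℝ), ∀ l ≥ (1:ℝ),
      α (l * t) / α t ≤ c * l ^ s} := by
    refine ⟨c, hc0, fun t ht l hl => ?_⟩
    rw [div_le_iff₀ (hpos t ht)]
    exact (hbd t ht l hl).1
  have hS0mem : -s ∈ {s : ℝ | ∃ c > (0:ℝ), ∀ t ≥ (1:ℝ), ∀ l ≥ (1:ℝ),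
      c * l ^ s ≤ α (l * t) / α t} := by
    refine ⟨c⁻¹, by positivity, fun t ht l hl => ?_⟩
    have hl0 : (0:ℝ) < l := by linarith
    have hls : (0:ℝ) < l ^ s := Real.rpow_pos_of_pos hl0 s
    rw [le_div_iff₀ (hpos t ht), Real.rpow_neg hl0.le]
    have h2 := (hbd t ht l hl).2
    have h3 : c⁻¹ * (l ^ s)⁻¹ * α t ≤ c⁻¹ * (l ^ s)⁻¹ * (c * l ^ s * α (l * t)) :=
      mul_le_mul_of_nonneg_left h2 (by positivity)
    have h4 : c⁻¹ * (l ^ s)⁻¹ * (c * l ^ s * α (l * t)) = α (l * t) := by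
      field_simp
    linarith [h3, h4.le, h4.ge]
  obtain ⟨p, hpmem, hs0p⟩ := exists_lt_of_lt_csSup ⟨-s, hS0mem⟩ h0
  obtain ⟨q, hqmem, hqs1⟩ := exists_lt_of_csInf_lt ⟨s, hS1mem⟩ h1
  obtain ⟨cp, hcp, hp⟩ := hpmem
  obtain ⟨cq, hcq, hq⟩ := hqmem
  -- p ≤ q
  have hpq : p ≤ q := by
    by_contra hcon
    push_neg at hcon
    set base : ℝ := max 1 (cq / cp + 1) with hbase
    have hbase1 : (1:ℝ) ≤ base := le_max_left _ _
    have hpq0 : (0:ℝ) < p - q := by linarith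
    set l : ℝ := base ^ ((p - q)⁻¹) with hldef
    have hl1 : (1:ℝ) ≤ l := Real.one_le_rpow hbase1 (by positivity)
    have hl0 : (0:ℝ) < l := by linarith
    have hlpq : l ^ (p - q) = base := by
      rw [hldef, ← Real.rpow_mul (by linarith : (0:ℝ) ≤ base),
        inv_mul_cancel₀ (ne_of_gt hpq0), Real.rpow_one]
    have e1 := hp 1 le_rfl l hl1
    have e2 := hq 1 le_rfl l hl1
    have h12 : cp * l ^ p ≤ cq * l ^ q := e1.trans e2
    have hadd : l ^ p = l ^ q * l ^ (p - q) := by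
      rw [← Real.rpow_add hl0]; congr 1; ring
    have hlq0 : (0:ℝ) < l ^ q := Real.rpow_pos_of_pos hl0 q
    have h5 : cp * l ^ (p - q) * l ^ q ≤ cq * l ^ q := by
      calc cp * l ^ (p - q) * l ^ q = cp * l ^ p := by rw [hadd]; ring
        _ ≤ cq * l ^ q := h12
    have h6 : cp * l ^ (p - q) ≤ cq := le_of_mul_le_mul_right h5 hlq0
    rw [hlpq] at h6
    have h7 : cq / cp + 1 ≤ base := le_max_right _ _
    have h8 : cp * (cq / cp + 1) ≤ cq := by
      calc cp * (cq / cp + 1) ≤ cp * base := by gcongr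
        _ ≤ cq := h6
    rw [mul_add, mul_div_cancel₀ _ (ne_of_gt hcp), mul_one] at h8
    linarith
  have hδ : (0:ℝ) < s₁ - s₀ := by linarith
  set ψ : ℝ → ℝ := psiInterp α s₀ s₁ with hψdef
  have hKey := psi_bounds α hpos s₀ s₁ p q cp cq hcp hcq hp hq hs0p hqs1 hpq
  set θ : ℝ := (q - s₀) / (s₁ - s₀) with hθdef
  have hθ0 : 0 < θ := div_pos (by linarith) hδ
  have hθ1 : θ < 1 := by
    rw [hθdef, div_lt_one hδ]; linarith
  -- restated bounds
  have hψpos : ∀ t ≥ (1:ℝ), 0 < ψ t := by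
    intro t ht
    have ht0 : (0:ℝ) < t := by linarith
    have : ψ t = t ^ (-s₀ / (s₁ - s₀)) * α (t ^ ((1:ℝ)/(s₁ - s₀))) := by
      simp only [hψdef, psiInterp]; rw [if_pos ht]
    rw [this]
    have := hpos (t ^ ((1:ℝ)/(s₁ - s₀))) (Real.one_le_rpow ht (by positivity))
    positivity
  have hψ1 : ψ 1 = α 1 := by
    simp [hψdef, psiInterp]
  have hmono : ∀ t, (1:ℝ) ≤ t → ∀ r, t ≤ r → cp * ψ t ≤ ψ r := by
    intro t ht r htr
    have ht0 : (0:ℝ) < t := by linarith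
    have hl : (1:ℝ) ≤ r / t := (one_le_div ht0).mpr htr
    have := (hKey t ht (r / t) hl).1
    rwa [div_mul_cancel₀ _ (ne_of_gt ht0)] at this
  have hup : ∀ t, (1:ℝ) ≤ t → ∀ r, t ≤ r → ψ r ≤ cq * (r / t) ^ θ * ψ t := by
    intro t ht r htr
    have ht0 : (0:ℝ) < t := by linarith
    have hl : (1:ℝ) ≤ r / t := (one_le_div ht0).mpr htr
    have := (hKey t ht (r / t) hl).2
    rwa [div_mul_cancel₀ _ (ne_of_gt ht0)] at this
  have hα1 : 0 < α 1 := hpos 1 le_rfl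
  constructor
  · -- ClassB
    refine ⟨?_, ?_, ?_, ?_⟩
    · -- measurable
      have hrepr : ψ = fun t => if 1 ≤ t then
          Real.exp (Real.log t * (-s₀ / (s₁ - s₀))) *
            α (Real.exp (Real.log t * ((1:ℝ) / (s₁ - s₀)))) else α 1 := by
        funext t
        simp only [hψdef, psiInterp]
        split_ifs with h
        · rw [Real.rpow_def_of_pos (by linarith), Real.rpow_def_of_pos (by linarith)]
        · rfl
      rw [hrepr]
      exact Measurable.ite measurableSet_Ici
        ((Real.measurable_exp.comp (Real.measurable_log.mul_const _)).mul
          (hmeas.comp (Real.measurable_exp.comp (Real.measurable_log.mul_const _))))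
        measurable_const
    · intro t ht
      by_cases h1t : (1:ℝ) ≤ t
      · exact hψpos t h1t
      · have : ψ t = α 1 := by simp only [hψdef, psiInterp]; rw [if_neg h1t]
        rw [this]; exact hα1
    · intro a b ha hab
      refine ⟨max (α 1) (cq * (max 1 b) ^ θ * α 1), fun t ⟨hta, htb⟩ => ?_⟩
      by_cases h1t : (1:ℝ) ≤ t
      · have h := hup 1 le_rfl t h1t
        rw [div_one, hψ1] at h
        have htb' : t ≤ max 1 b := le_trans htb (le_max_right _ _)
        have h2 : t ^ θ ≤ (max 1 b) ^ θ :=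
          Real.rpow_le_rpow (by linarith) htb' hθ0.le
        have : cq * t ^ θ * α 1 ≤ cq * (max 1 b) ^ θ * α 1 := by gcongr
        exact le_trans (h.trans this) (le_max_right _ _)
      · have : ψ t = α 1 := by simp only [hψdef, psiInterp]; rw [if_neg h1t]
        rw [this]; exact le_max_left _ _
    · intro r hr
      refine ⟨max (α 1)⁻¹ (cp * α 1)⁻¹, fun t htr => ?_⟩
      by_cases h1t : (1:ℝ) ≤ t
      · have h := hmono 1 le_rfl t h1t
        rw [hψ1] at h
        have h2 : (ψ t)⁻¹ ≤ (cp * α 1)⁻¹ :=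
          inv_anti₀ (by positivity) h
        exact h2.trans (le_max_right _ _)
      · have : ψ t = α 1 := by simp only [hψdef, psiInterp]; rw [if_neg h1t]
        rw [this]; exact le_max_left _ _
  · -- pseudoconcavity
    haveI : Nonempty (Set.Ici (1:ℝ)) := ⟨⟨1, Set.self_mem_Ici⟩⟩
    set ψ₁ : ℝ → ℝ := fun t => ⨅ r : Set.Ici (1:ℝ), ψ r * ((t / r) ^ θ + 1) with hψ₁def
    have hterm_pos : ∀ t, 0 < t → ∀ r : Set.Ici (1:ℝ), 0 < ψ r * ((t / r) ^ θ + 1) := by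
      rintro t ht ⟨r, hr⟩
      have hr0 : (0:ℝ) < r := by have := mem_Ici.mp hr; linarith
      have h1 : 0 ≤ (t / r) ^ θ := Real.rpow_nonneg (by positivity) θ
      have h2 := hψpos r (mem_Ici.mp hr)
      nlinarith
    have hbdd : ∀ t, 0 < t →
        BddBelow (Set.range fun r : Set.Ici (1:ℝ) => ψ r * ((t / r) ^ θ + 1)) := by
      intro t ht
      refine ⟨0, ?_⟩
      rintro x ⟨r, rfl⟩
      exact (hterm_pos t ht r).le
    set cmin : ℝ := min cp cq⁻¹ with hcmin
    have hcmin0 : 0 < cmin := lt_min hcp (by positivity)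
    have hψ₁le : ∀ t, 1 < t → ψ₁ t ≤ 2 * ψ t := by
      intro t ht
      have h := ciInf_le (hbdd t (by linarith)) (⟨t, le_of_lt ht⟩ : Set.Ici (1:ℝ))
      simp only at h
      rw [div_self (by linarith : t ≠ 0), Real.one_rpow] at h
      calc ψ₁ t ≤ ψ t * (1 + 1) := h
        _ = 2 * ψ t := by ring
    have hψ₁ge : ∀ t, 1 < t → cmin * ψ t ≤ ψ₁ t := by
      intro t ht
      apply le_ciInf
      rintro ⟨r, hr⟩
      have hr1 : (1:ℝ) ≤ r := mem_Ici.mp hr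
      have hψt := hψpos t (by linarith)
      have hψr := hψpos r hr1
      have hX : 0 ≤ (t / r) ^ θ := Real.rpow_nonneg (by positivity) θ
      by_cases hrt : t ≤ r
      · have h := hmono t (by linarith) r hrt
        calc cmin * ψ t ≤ cp * ψ t :=
              mul_le_mul_of_nonneg_right (min_le_left _ _) hψt.le
          _ ≤ ψ r := h
          _ ≤ ψ r * ((t / r) ^ θ + 1) := by nlinarith
      · push_neg at hrt
        have h := hup r hr1 t hrt.le
        have h2 : cq⁻¹ * ψ t ≤ cq⁻¹ * (cq * (t / r) ^ θ * ψ r) :=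
          mul_le_mul_of_nonneg_left h (by positivity)
        have h3 : cq⁻¹ * (cq * (t / r) ^ θ * ψ r) = (t / r) ^ θ * ψ r := by
          field_simp
        calc cmin * ψ t ≤ cq⁻¹ * ψ t :=
              mul_le_mul_of_nonneg_right (min_le_right _ _) hψt.le
          _ ≤ (t / r) ^ θ * ψ r := by linarith [h2, h3.le, h3.ge]
          _ ≤ ψ r * ((t / r) ^ θ + 1) := by nlinarith
    refine ⟨1, le_rfl, ψ₁, ?_, ?_, ?_⟩
    · -- concavity
      refine ⟨convex_Ioi 1, ?_⟩
      intro x hx y hy a b ha hb hab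
      have hx1 : (1:ℝ) < x := hx
      have hy1 : (1:ℝ) < y := hy
      have hx0 : (0:ℝ) < x := by linarith
      have hy0 : (0:ℝ) < y := by linarith
      have hz0 : (0:ℝ) < a * x + b * y := by nlinarith
      simp only [smul_eq_mul]
      apply le_ciInf
      rintro ⟨r, hr⟩
      have hr1 : (1:ℝ) ≤ r := mem_Ici.mp hr
      have hr0 : (0:ℝ) < r := by linarith
      have hιx := ciInf_le (hbdd x hx0) (⟨r, hr⟩ : Set.Ici (1:ℝ))
      have hιy := ciInf_le (hbdd y hy0) (⟨r, hr⟩ : Set.Ici (1:ℝ))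
      simp only at hιx hιy
      have hψr := (hψpos r hr1).le
      have hconc := (Real.concaveOn_rpow hθ0.le hθ1.le).2
        (mem_Ici.mpr (div_nonneg hx0.le hr0.le))
        (mem_Ici.mpr (div_nonneg hy0.le hr0.le)) ha hb hab
      simp only [smul_eq_mul] at hconc
      have hdiv : a * (x / r) + b * (y / r) = (a * x + b * y) / r := by ring
      rw [hdiv] at hconc
      have hmul := mul_le_mul_of_nonneg_left hconc hψr
      calc a * ψ₁ x + b * ψ₁ y
          ≤ a * (ψ r * ((x / r) ^ θ + 1)) + b * (ψ r * ((y / r) ^ θ + 1)) :=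
            add_le_add (mul_le_mul_of_nonneg_left hιx ha)
              (mul_le_mul_of_nonneg_left hιy hb)
        _ = ψ r * (a * (x / r) ^ θ + b * (y / r) ^ θ) + (a + b) * ψ r := by ring
        _ = ψ r * (a * (x / r) ^ θ + b * (y / r) ^ θ) + ψ r := by rw [hab]; ring
        _ ≤ ψ r * ((a * x + b * y) / r) ^ θ + ψ r := by linarith [hmul]
        _ = ψ r * (((a * x + b * y) / r) ^ θ + 1) := by ring
    · intro t ht
      exact lt_of_lt_of_le (mul_pos hcmin0 (hψpos t (le_of_lt ht))) (hψ₁ge t ht)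
    · refine ⟨cmin⁻¹ + 2, by positivity, fun t ht => ?_⟩
      have hψt := hψpos t (le_of_lt ht)
      have hge := hψ₁ge t ht
      have hle := hψ₁le t ht
      have hψ₁pos : 0 < ψ₁ t := lt_of_lt_of_le (mul_pos hcmin0 hψt) hge
      have hcmi : 0 < cmin⁻¹ := by positivity
      constructor
      · have h1 : ψ t ≤ cmin⁻¹ * ψ₁ t := by
          have h := mul_le_mul_of_nonneg_left hge (inv_nonneg.mpr hcmin0.le)
          rwa [← mul_assoc, inv_mul_cancel₀ (ne_of_gt hcmin0), one_mul] at h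
        have h2 : cmin⁻¹ * ψ₁ t ≤ (cmin⁻¹ + 2) * ψ₁ t :=
          mul_le_mul_of_nonneg_right (by linarith) hψ₁pos.le
        linarith
      · have h3 : 2 * ψ t ≤ (cmin⁻¹ + 2) * ψ t :=
          mul_le_mul_of_nonneg_right (by linarith) hψt.le
        linarith
end

section
/- Let α ∈ RO. The weight function k(ξ) := α((1+|ξ|²)^{1/2}) on ℝⁿ satisfies: there exist constants C ≥ 1 and N ≥ 0 such that k(ξ + η) ≤ C (1 + |ξ|)^N k(η) for all ξ, η ∈ ℝⁿ. -/
lemma ro_pow_aux (α : ℝ → ℝ) (hpos : ∀ t ≥ (1:ℝ), 0 < α t) (b : ℝ) (hb : 1 < b)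
    (c : ℝ) (hc : 1 ≤ c)
    (H : ∀ t ≥ (1:ℝ), ∀ l ∈ Set.Icc (1:ℝ) b, c⁻¹ ≤ α (l * t) / α t ∧ α (l * t) / α t ≤ c) :
    ∀ k : ℕ, ∀ t ≥ (1:ℝ), ∀ l, 1 ≤ l → l ≤ b ^ k →
      α (l * t) ≤ c ^ k * α t ∧ α t ≤ c ^ k * α (l * t) := by
  have hc0 : (0:ℝ) < c := lt_of_lt_of_le one_pos hc
  intro k
  induction k with
  | zero =>
    intro t ht l hl1 hlb
    simp only [pow_zero] at hlb ⊢
    have hl : l = 1 := le_antisymm hlb hl1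
    subst hl
    simp
  | succ k ih =>
    intro t ht l hl1 hlb
    have hckpos : (0:ℝ) < c ^ k := pow_pos hc0 k
    have hαt := hpos t ht
    by_cases hcase : l ≤ b ^ k
    · obtain ⟨h1, h2⟩ := ih t ht l hl1 hcase
      have hαlt := hpos (l * t) (by nlinarith)
      have hck : c ^ k ≤ c ^ (k + 1) := pow_le_pow_right₀ hc (Nat.le_succ k)
      constructor <;> nlinarith
    · push_neg at hcase
      have hbkpos : (0:ℝ) < b ^ k := pow_pos (lt_trans one_pos hb) k
      have hbk1 : (1:ℝ) ≤ b ^ k := one_le_pow₀ hb.le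
      set m := l / b ^ k with hm
      have hm1 : 1 ≤ m := (one_le_div hbkpos).2 hcase.le
      have hmb : m ≤ b := by
        rw [hm, div_le_iff₀ hbkpos]
        calc l ≤ b ^ (k + 1) := hlb
          _ = b * b ^ k := by ring
      have ht' : (1:ℝ) ≤ b ^ k * t := by nlinarith
      obtain ⟨H1, H2⟩ := H (b ^ k * t) ht' m ⟨hm1, hmb⟩
      have heq : m * (b ^ k * t) = l * t := by
        field_simp [hm]
        rw [hm, div_mul_cancel₀ _ (ne_of_gt hbkpos)]
      rw [heq] at H1 H2
      obtain ⟨h1, h2⟩ := ih t ht (b ^ k) hbk1 le_rfl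
      have hαbt := hpos (b ^ k * t) ht'
      have hαlt := hpos (l * t) (by nlinarith)
      have A : α (l * t) ≤ c * α (b ^ k * t) := by
        rw [div_le_iff₀ hαbt] at H2; linarith
      have B : α (b ^ k * t) ≤ c * α (l * t) := by
        rw [le_div_iff₀ hαbt] at H1
        have hcc : c * c⁻¹ = 1 := mul_inv_cancel₀ (ne_of_gt hc0)
        nlinarith
      constructor
      · calc α (l * t) ≤ c * α (b ^ k * t) := A
          _ ≤ c * (c ^ k * α t) := by nlinarith
          _ = c ^ (k + 1) * α t := by ring
      · calc α t ≤ c ^ k * α (b ^ k * t) := h2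
          _ ≤ c ^ k * (c * α (l * t)) := by nlinarith
          _ = c ^ (k + 1) * α (l * t) := by ring

lemma ro_rpow_aux (α : ℝ → ℝ) (hpos : ∀ t ≥ (1:ℝ), 0 < α t) (b : ℝ) (hb : 1 < b)
    (c : ℝ) (hc : 1 ≤ c)
    (H : ∀ t ≥ (1:ℝ), ∀ l ∈ Set.Icc (1:ℝ) b, c⁻¹ ≤ α (l * t) / α t ∧ α (l * t) / α t ≤ c) :
    ∀ t ≥ (1:ℝ), ∀ l, 1 ≤ l →
      α (l * t) ≤ c * l ^ (Real.logb b c) * α t ∧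
      α t ≤ c * l ^ (Real.logb b c) * α (l * t) := by
  have hc0 : (0:ℝ) < c := lt_of_lt_of_le one_pos hc
  have hb0 : (0:ℝ) < b := lt_trans one_pos hb
  intro t ht l hl1
  have hl0 : (0:ℝ) < l := lt_of_lt_of_le one_pos hl1
  set k := ⌈Real.logb b l⌉₊ with hk
  have hlog0 : 0 ≤ Real.logb b l := Real.logb_nonneg hb hl1
  have hlk : l ≤ b ^ k := by
    have h1 : l = b ^ (Real.logb b l) := (Real.rpow_logb hb0 (ne_of_gt hb) hl0).symm
    have h2 : b ^ (Real.logb b l) ≤ b ^ ((k : ℝ)) :=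
      Real.rpow_le_rpow_of_exponent_le hb.le (Nat.le_ceil _)
    rw [Real.rpow_natCast] at h2
    linarith [h1 ▸ h2]
  obtain ⟨h1, h2⟩ := ro_pow_aux α hpos b hb c hc H k t ht l hl1 hlk
  have hck : (c : ℝ) ^ k ≤ c * l ^ (Real.logb b c) := by
    have hkle : (k : ℝ) ≤ Real.logb b l + 1 := by
      have := Nat.ceil_lt_add_one hlog0
      linarith
    have e1 : (c : ℝ) ^ k = c ^ ((k : ℝ)) := (Real.rpow_natCast c k).symm
    have e2 : c ^ ((k : ℝ)) ≤ c ^ (Real.logb b l + 1) :=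
      Real.rpow_le_rpow_of_exponent_le hc hkle
    have e3 : c ^ (Real.logb b l + 1) = c * c ^ (Real.logb b l) := by
      rw [Real.rpow_add hc0]; ring_nf; rw [Real.rpow_one]
    have e4 : c ^ (Real.logb b l) = l ^ (Real.logb b c) := by
      rw [Real.rpow_def_of_pos hc0, Real.rpow_def_of_pos hl0, Real.logb, Real.logb]
      ring_nf
    rw [e1]
    calc c ^ ((k:ℝ)) ≤ c ^ (Real.logb b l + 1) := e2
      _ = c * l ^ (Real.logb b c) := by rw [e3, e4]
  have hαt := hpos t ht
  have hαlt := hpos (l * t) (by nlinarith)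
  constructor <;> nlinarith

set_option maxHeartbeats 1000000 in
/-- for `α ∈ RO`, the weight `k(ξ) = α((1+|ξ|²)^{1/2})` is a tempered
weight function in Hörmander's sense: `k(ξ+η) ≤ C (1+|ξ|)^N k(η)` for all `ξ, η`. -/
theorem weight_is_tempered (n : ℕ) (α : ℝ → ℝ) (hα : RO α) :
    ∃ C ≥ (1:ℝ), ∃ N ≥ (0:ℝ), ∀ ξ η : EuclideanSpace ℝ (Fin n),
      wt α (ξ + η) ≤ C * (1 + ‖ξ‖) ^ N * wt α η := by
  obtain ⟨hmeas, hpos, b, hb, c, hc, H⟩ := hα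
  have hc0 : (0:ℝ) < c := lt_of_lt_of_le one_pos hc
  set s := Real.logb b c with hs
  have hs0 : 0 ≤ s := Real.logb_nonneg hb hc
  have hsqrt2 : (1:ℝ) ≤ Real.sqrt 2 := by
    nlinarith [Real.sq_sqrt (show (0:ℝ) ≤ 2 by norm_num), Real.sqrt_nonneg 2]
  have hC1 : (1:ℝ) ≤ c * Real.sqrt 2 ^ s := by
    have h2 : (1:ℝ) ≤ Real.sqrt 2 ^ s := Real.one_le_rpow hsqrt2 hs0
    nlinarith
  refine ⟨c * Real.sqrt 2 ^ s, hC1, s, hs0, ?_⟩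
  intro ξ η
  simp only [wt]
  set T := Real.sqrt (1 + ‖ξ + η‖ ^ 2) with hTdef
  set U := Real.sqrt (1 + ‖η‖ ^ 2) with hUdef
  set X := Real.sqrt (1 + ‖ξ‖ ^ 2) with hXdef
  have one_le_sqrt : ∀ x : ℝ, 0 ≤ x → (1:ℝ) ≤ Real.sqrt (1 + x ^ 2) := by
    intro x hx
    nlinarith [Real.sq_sqrt (show (0:ℝ) ≤ 1 + x ^ 2 by positivity),
      Real.sqrt_nonneg (1 + x ^ 2), sq_nonneg x]
  have hT1 : (1:ℝ) ≤ T := one_le_sqrt _ (norm_nonneg _)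
  have hU1 : (1:ℝ) ≤ U := one_le_sqrt _ (norm_nonneg _)
  have hX1 : (1:ℝ) ≤ X := one_le_sqrt _ (norm_nonneg _)
  have hT0 : (0:ℝ) < T := lt_of_lt_of_le one_pos hT1
  have hU0 : (0:ℝ) < U := lt_of_lt_of_le one_pos hU1
  -- Peetre-type inequalities
  have peetre : ∀ u v : EuclideanSpace ℝ (Fin n),
      Real.sqrt (1 + ‖u + v‖ ^ 2) ≤
        Real.sqrt 2 * Real.sqrt (1 + ‖u‖ ^ 2) * Real.sqrt (1 + ‖v‖ ^ 2) := by
    intro u v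
    have hnorm : ‖u + v‖ ≤ ‖u‖ + ‖v‖ := norm_add_le u v
    have h1 : 1 + ‖u + v‖ ^ 2 ≤ 2 * (1 + ‖u‖ ^ 2) * (1 + ‖v‖ ^ 2) := by
      nlinarith [norm_nonneg u, norm_nonneg v, norm_nonneg (u + v),
        sq_nonneg (‖u‖ - ‖v‖), sq_nonneg (‖u‖ * ‖v‖)]
    calc Real.sqrt (1 + ‖u + v‖ ^ 2)
        ≤ Real.sqrt (2 * (1 + ‖u‖ ^ 2) * (1 + ‖v‖ ^ 2)) := Real.sqrt_le_sqrt h1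
      _ = Real.sqrt 2 * Real.sqrt (1 + ‖u‖ ^ 2) * Real.sqrt (1 + ‖v‖ ^ 2) := by
          rw [Real.sqrt_mul (by positivity), Real.sqrt_mul (by norm_num)]
  have hTU : T ≤ Real.sqrt 2 * X * U := peetre ξ η
  have hUT : U ≤ Real.sqrt 2 * X * T := by
    have := peetre (-ξ) (ξ + η)
    simpa [norm_neg, show -ξ + (ξ + η) = η from by abel, hUdef, hXdef, hTdef,
      mul_comm, mul_assoc, mul_left_comm] using this
  set M := Real.sqrt 2 * X with hM
  have hM1 : (1:ℝ) ≤ M := by nlinarith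
  have hXle : X ≤ 1 + ‖ξ‖ := by
    have h1 : 1 + ‖ξ‖ ^ 2 ≤ (1 + ‖ξ‖) ^ 2 := by nlinarith [norm_nonneg ξ]
    calc X ≤ Real.sqrt ((1 + ‖ξ‖) ^ 2) := Real.sqrt_le_sqrt h1
      _ = 1 + ‖ξ‖ := Real.sqrt_sq (by positivity)
  have hMle : M ≤ Real.sqrt 2 * (1 + ‖ξ‖) := by nlinarith
  have hMs : M ^ s ≤ Real.sqrt 2 ^ s * (1 + ‖ξ‖) ^ s := by
    calc M ^ s ≤ (Real.sqrt 2 * (1 + ‖ξ‖)) ^ s :=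
        Real.rpow_le_rpow (by positivity) hMle hs0
      _ = Real.sqrt 2 ^ s * (1 + ‖ξ‖) ^ s :=
        Real.mul_rpow (by positivity) (by positivity)
  have hαU := hpos U hU1
  have hαT := hpos T hT1
  have hMs0 : (0:ℝ) ≤ M ^ s := Real.rpow_nonneg (by positivity) s
  have key : α T ≤ c * M ^ s * α U := by
    rcases le_total U T with hcase | hcase
    · -- T = (T/U) * U with T/U ∈ [1, M]
      have hl1 : (1:ℝ) ≤ T / U := (one_le_div hU0).2 hcase
      have hlM : T / U ≤ M := by
        rw [div_le_iff₀ hU0]; nlinarith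
      have h := (ro_rpow_aux α hpos b hb c hc H U hU1 (T / U) hl1).1
      rw [div_mul_cancel₀ _ (ne_of_gt hU0), ← hs] at h
      have hpow : (T / U) ^ s ≤ M ^ s :=
        Real.rpow_le_rpow (by positivity) hlM hs0
      have h2 := mul_le_mul_of_nonneg_right
        (mul_le_mul_of_nonneg_left hpow hc0.le) hαU.le
      linarith
    · -- U = (U/T) * T with U/T ∈ [1, M]
      have hl1 : (1:ℝ) ≤ U / T := (one_le_div hT0).2 hcase
      have hlM : U / T ≤ M := by
        rw [div_le_iff₀ hT0]; nlinarith
      have h := (ro_rpow_aux α hpos b hb c hc H T hT1 (U / T) hl1).2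
      rw [div_mul_cancel₀ _ (ne_of_gt hT0), ← hs] at h
      have hpow : (U / T) ^ s ≤ M ^ s :=
        Real.rpow_le_rpow (by positivity) hlM hs0
      have h2 := mul_le_mul_of_nonneg_right
        (mul_le_mul_of_nonneg_left hpow hc0.le) hαU.le
      linarith
  have hfin : c * M ^ s * α U ≤ c * Real.sqrt 2 ^ s * (1 + ‖ξ‖) ^ s * α U := by
    have h2 := mul_le_mul_of_nonneg_right
      (mul_le_mul_of_nonneg_left hMs hc0.le) hαU.le
    have heq : c * (Real.sqrt 2 ^ s * (1 + ‖ξ‖) ^ s) * α U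
        = c * Real.sqrt 2 ^ s * (1 + ‖ξ‖) ^ s * α U := by ring
    linarith
  exact le_trans key hfin
end

section
/- Let T : X₀ → Y₀ be a linear map whose restrictions T : X₀ → Y₀ and T : X₁ → Y₁ are bounded Fredholm operators with the same kernel N and the same index, where [X₀,X₁] and [Y₀,Y₁] are admissible couples of separable Hilbert spaces (continuous dense embeddings X₁ ↪ X₀, Y₁ ↪ Y₀). If ψ ∈ 𝓑 is an interpolation parameter, then T : X_ψ → Y_ψ is bounded and Fredholm with kernel N, the same index, and range equal to Y_ψ ∩ T(X₀). -/
open Module LinearMap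
set_option maxHeartbeats 2000000

private lemma aux_closed_range {E F : Type*} [NormedAddCommGroup E] [InnerProductSpace ℂ E]
    [CompleteSpace E] [NormedAddCommGroup F] [NormedSpace ℂ F] [CompleteSpace F]
    (T : E →L[ℂ] F) (hcoker : FiniteDimensional ℂ (F ⧸ LinearMap.range (T : E →ₗ[ℂ] F))) :
    IsClosed ((LinearMap.range (T : E →ₗ[ℂ] F) : Submodule ℂ F) : Set F) := by
  haveI := hcoker
  haveI : CompleteSpace (LinearMap.ker (T : E →ₗ[ℂ] F)) := (ContinuousLinearMap.isClosed_ker T).completeSpace_coe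
  haveI : CompleteSpace ((LinearMap.ker (T : E →ₗ[ℂ] F))ᗮ : Submodule ℂ E) :=
    (Submodule.isClosed_orthogonal _).completeSpace_coe
  obtain ⟨M, hM⟩ := Submodule.exists_isCompl (LinearMap.range (T : E →ₗ[ℂ] F) : Submodule ℂ F)
  haveI : FiniteDimensional ℂ M :=
    (Submodule.quotientEquivOfIsCompl _ _ hM).finiteDimensional
  haveI : CompleteSpace M := FiniteDimensional.complete ℂ _
  set S : ((LinearMap.ker (T : E →ₗ[ℂ] F))ᗮ × M) →L[ℂ] F :=
    (T.comp (Submodule.subtypeL (LinearMap.ker (T : E →ₗ[ℂ] F))ᗮ)).coprod (Submodule.subtypeL M) with hS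
  have hSapp : ∀ p : (LinearMap.ker (T : E →ₗ[ℂ] F))ᗮ × M, S p = T p.1 + p.2 := fun p => rfl
  have hdec : ∀ x : E, ∃ x' : (LinearMap.ker (T : E →ₗ[ℂ] F))ᗮ, T x' = T x := by
    intro x
    refine ⟨⟨x - (Submodule.orthogonalProjectionOnto (LinearMap.ker (T : E →ₗ[ℂ] F)) x : E),
      Submodule.sub_starProjection_mem_orthogonal x⟩, ?_⟩
    have hmem : T ((Submodule.orthogonalProjectionOnto (LinearMap.ker (T : E →ₗ[ℂ] F)) x : E)) = 0 :=
      LinearMap.mem_ker.1 (Submodule.orthogonalProjectionOnto (LinearMap.ker (T : E →ₗ[ℂ] F)) x).2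
    simp only [map_sub, hmem, sub_zero]
  have hinj : LinearMap.ker (S : ((LinearMap.ker (T : E →ₗ[ℂ] F))ᗮ × M) →ₗ[ℂ] F) = ⊥ := by
    rw [LinearMap.ker_eq_bot']
    rintro ⟨x, m⟩ hp
    rw [ContinuousLinearMap.coe_coe, hSapp] at hp
    have h1 : T (x : E) = -(m : F) := eq_neg_of_add_eq_zero_left hp
    have h2 : T (x : E) ∈ (LinearMap.range (T : E →ₗ[ℂ] F) : Submodule ℂ F) ⊓ M := by
      refine ⟨LinearMap.mem_range_self _ _, ?_⟩
      rw [h1]; exact neg_mem m.2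
    rw [hM.inf_eq_bot] at h2
    have hm : (m : F) = 0 := by rw [← neg_eq_zero, ← h1]; exact h2
    have hx : (x : E) ∈ (LinearMap.ker (T : E →ₗ[ℂ] F)) ⊓ (LinearMap.ker (T : E →ₗ[ℂ] F))ᗮ := by
      refine ⟨LinearMap.mem_ker.2 ?_, x.2⟩
      rw [ContinuousLinearMap.coe_coe, h1, hm, neg_zero]
    rw [Submodule.inf_orthogonal_eq_bot] at hx
    ext <;> simp_all
  have hsurj : LinearMap.range (S : ((LinearMap.ker (T : E →ₗ[ℂ] F))ᗮ × M) →ₗ[ℂ] F) = ⊤ := by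
    rw [LinearMap.range_eq_top]
    intro y
    obtain ⟨t, m, ht, hm, hy⟩ := Submodule.codisjoint_iff_exists_add_eq.mp hM.codisjoint y
    obtain ⟨x, hx⟩ := ht
    obtain ⟨x', hx'⟩ := hdec x
    exact ⟨(x', ⟨m, hm⟩), by rw [ContinuousLinearMap.coe_coe, hSapp]; simp [hx', (show T x = t from hx), hy]⟩
  let e := ContinuousLinearEquiv.ofBijective S hinj hsurj
  have happ : ∀ p, e p = S p := fun p => rfl
  have heq : ((LinearMap.range (T : E →ₗ[ℂ] F) : Submodule ℂ F) : Set F)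
      = e '' {p : (LinearMap.ker (T : E →ₗ[ℂ] F))ᗮ × M | p.2 = 0} := by
    ext y
    constructor
    · rintro ⟨x, rfl⟩
      obtain ⟨x', hx'⟩ := hdec x
      exact ⟨(x', 0), rfl, by rw [happ, hSapp]; simpa using hx'⟩
    · rintro ⟨⟨x, m⟩, hm, rfl⟩
      simp only [Set.mem_setOf_eq] at hm
      rw [happ, hSapp, hm]
      simpa using LinearMap.mem_range_self _ (x : E)
  rw [heq]
  exact (e.toHomeomorph.isClosedMap) _ (isClosed_eq continuous_snd continuous_const)

private lemma aux_dense_sub {Y : Type*} [NormedAddCommGroup Y] [InnerProductSpace ℂ Y]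
    [CompleteSpace Y] {Z : Type*} [NormedAddCommGroup Z] [NormedSpace ℂ Z]
    (f : Z →L[ℂ] Y) (hf : DenseRange f) (r : Submodule ℂ Y) (hr : IsClosed (r : Set Y))
    (hfin : FiniteDimensional ℂ (rᗮ : Submodule ℂ Y)) :
    ∀ y : Y, ∃ z : Z, y - f z ∈ r := by
  haveI : CompleteSpace r := hr.completeSpace_coe
  haveI := hfin
  have horth : rᗮᗮ = r := Submodule.orthogonal_orthogonal r
  set P : Y →L[ℂ] (rᗮ : Submodule ℂ Y) := Submodule.orthogonalProjectionOnto rᗮ with hP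
  have hPker : ∀ y : Y, P y = 0 → y ∈ r := by
    intro y hy
    have : y - ((Submodule.orthogonalProjectionOnto rᗮ y : rᗮ) : Y) ∈ rᗮᗮ :=
      Submodule.sub_starProjection_mem_orthogonal (K := rᗮ) y
    rw [← hP, hy] at this
    simpa [horth] using this
  have himg : ∀ u : (rᗮ : Submodule ℂ Y), ∃ z : Z, P (f z) = u := by
    have hcl : IsClosed ((LinearMap.range (P.comp f : Z →ₗ[ℂ] (rᗮ : Submodule ℂ Y)) : Submodule ℂ (rᗮ : Submodule ℂ Y)) :
        Set (rᗮ : Submodule ℂ Y)) := Submodule.closed_of_finiteDimensional _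
    intro u
    have h1 : P u = u := Submodule.orthogonalProjectionOnto_mem_subspace_eq_self u
    have h2 : (u : Y) ∈ closure (Set.range f) := hf _
    have h3 : P (u : Y) ∈ closure (P '' Set.range f) :=
      image_closure_subset_closure_image P.continuous ⟨(u : Y), h2, rfl⟩
    rw [h1] at h3
    have h4 : closure (P '' Set.range f)
        = ((LinearMap.range (P.comp f : Z →ₗ[ℂ] (rᗮ : Submodule ℂ Y)) : Submodule ℂ (rᗮ : Submodule ℂ Y)) : Set (rᗮ : Submodule ℂ Y)) := by
      have himeq : P '' Set.range f
          = ((LinearMap.range (P.comp f : Z →ₗ[ℂ] (rᗮ : Submodule ℂ Y)) : Submodule ℂ (rᗮ : Submodule ℂ Y)) : Set (rᗮ : Submodule ℂ Y)) := by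
        ext v
        simp [Set.range_comp, LinearMap.mem_range, Set.mem_image]
      rw [himeq, IsClosed.closure_eq hcl]
    rw [h4] at h3
    obtain ⟨z, hz⟩ := h3
    exact ⟨z, hz⟩
  intro y
  obtain ⟨z, hz⟩ := himg (P y)
  refine ⟨z, hPker _ ?_⟩
  rw [map_sub, hz, sub_self]

/-- interpolation of Fredholm operators: let `[X₀,X₁]`, `[Y₀,Y₁]` be
admissible couples of separable Hilbert spaces, with interpolation spaces `Xψ`, `Yψ`
(for an interpolation parameter `ψ ∈ 𝓑`, expressed abstractly through the interpolation
property for operators between the couples). If `T` restricts to bounded Fredholm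
operators `T : X₀ → Y₀` and `T : X₁ → Y₁` with the same kernel `N ⊆ X₁` and the same
index, then `T : Xψ → Yψ` is a bounded Fredholm operator with kernel `N`, the same
index, and range `Yψ ∩ T(X₀)`. -/
theorem interpolation_of_fredholm_operators
    {X₀ X₁ Xψ Y₀ Y₁ Yψ : Type*}
    [NormedAddCommGroup X₀] [InnerProductSpace ℂ X₀] [CompleteSpace X₀]
    [TopologicalSpace.SeparableSpace X₀]
    [NormedAddCommGroup X₁] [InnerProductSpace ℂ X₁] [CompleteSpace X₁]
    [TopologicalSpace.SeparableSpace X₁]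
    [NormedAddCommGroup Xψ] [InnerProductSpace ℂ Xψ] [CompleteSpace Xψ]
    [TopologicalSpace.SeparableSpace Xψ]
    [NormedAddCommGroup Y₀] [InnerProductSpace ℂ Y₀] [CompleteSpace Y₀]
    [TopologicalSpace.SeparableSpace Y₀]
    [NormedAddCommGroup Y₁] [InnerProductSpace ℂ Y₁] [CompleteSpace Y₁]
    [TopologicalSpace.SeparableSpace Y₁]
    [NormedAddCommGroup Yψ] [InnerProductSpace ℂ Yψ] [CompleteSpace Yψ]
    [TopologicalSpace.SeparableSpace Yψ]
    -- the admissible couple `[X₀, X₁]` with intermediate space `Xψ`: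
    (ιX : X₁ →L[ℂ] X₀) (hιX : Function.Injective ιX) (hdιX : DenseRange ιX)
    (κX : Xψ →L[ℂ] X₀) (hκX : Function.Injective κX) (hdκX : DenseRange κX)
    (jX : X₁ →L[ℂ] Xψ) (hjX : ∀ x, κX (jX x) = ιX x) (hdjX : DenseRange jX)
    -- the admissible couple `[Y₀, Y₁]` with intermediate space `Yψ`:
    (ιY : Y₁ →L[ℂ] Y₀) (hιY : Function.Injective ιY) (hdιY : DenseRange ιY)
    (κY : Yψ →L[ℂ] Y₀) (hκY : Function.Injective κY) (hdκY : DenseRange κY)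
    (jY : Y₁ →L[ℂ] Yψ) (hjY : ∀ y, κY (jY y) = ιY y) (hdjY : DenseRange jY)
    -- `ψ` is an interpolation parameter: every operator bounded on both couples
    -- restricts to a bounded operator between the intermediate spaces:
    (hXY : ∀ (S₀ : X₀ →L[ℂ] Y₀) (S₁ : X₁ →L[ℂ] Y₁), (∀ x, S₀ (ιX x) = ιY (S₁ x)) →
      ∃ Sψ : Xψ →L[ℂ] Yψ, ∀ x, S₀ (κX x) = κY (Sψ x))
    (hYX : ∀ (S₀ : Y₀ →L[ℂ] X₀) (S₁ : Y₁ →L[ℂ] X₁), (∀ y, S₀ (ιY y) = ιX (S₁ y)) →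
      ∃ Sψ : Yψ →L[ℂ] Xψ, ∀ y, S₀ (κY y) = κX (Sψ y))
    (hXX : ∀ (S₀ : X₀ →L[ℂ] X₀) (S₁ : X₁ →L[ℂ] X₁), (∀ x, S₀ (ιX x) = ιX (S₁ x)) →
      ∃ Sψ : Xψ →L[ℂ] Xψ, ∀ x, S₀ (κX x) = κX (Sψ x))
    (hYY : ∀ (S₀ : Y₀ →L[ℂ] Y₀) (S₁ : Y₁ →L[ℂ] Y₁), (∀ y, S₀ (ιY y) = ιY (S₁ y)) →
      ∃ Sψ : Yψ →L[ℂ] Yψ, ∀ y, S₀ (κY y) = κY (Sψ y))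
    -- the operator `T`, its restrictions, and the Fredholm hypotheses:
    (T₀ : X₀ →L[ℂ] Y₀) (T₁ : X₁ →L[ℂ] Y₁) (hT : ∀ x, T₀ (ιX x) = ιY (T₁ x))
    (hker₀ : FiniteDimensional ℂ (LinearMap.ker (T₀ : X₀ →ₗ[ℂ] Y₀)))
    (hcoker₀ : FiniteDimensional ℂ (Y₀ ⧸ LinearMap.range (T₀ : X₀ →ₗ[ℂ] Y₀)))
    (hker₁ : FiniteDimensional ℂ (LinearMap.ker (T₁ : X₁ →ₗ[ℂ] Y₁)))
    (hcoker₁ : FiniteDimensional ℂ (Y₁ ⧸ LinearMap.range (T₁ : X₁ →ₗ[ℂ] Y₁)))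
    -- the kernels coincide (the kernel of `T₀` lies in `X₁`):
    (hsamek : ∀ x₀ : X₀, T₀ x₀ = 0 → ∃ x₁ : X₁, ιX x₁ = x₀ ∧ T₁ x₁ = 0)
    -- the indices coincide:
    (hind : (Module.finrank ℂ (LinearMap.ker (T₀ : X₀ →ₗ[ℂ] Y₀)) : ℤ) -
        Module.finrank ℂ (Y₀ ⧸ LinearMap.range (T₀ : X₀ →ₗ[ℂ] Y₀)) =
      (Module.finrank ℂ (LinearMap.ker (T₁ : X₁ →ₗ[ℂ] Y₁)) : ℤ) -
        Module.finrank ℂ (Y₁ ⧸ LinearMap.range (T₁ : X₁ →ₗ[ℂ] Y₁))) :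
    ∃ Tψ : Xψ →L[ℂ] Yψ,
      (∀ x : Xψ, T₀ (κX x) = κY (Tψ x)) ∧
      FiniteDimensional ℂ (LinearMap.ker (Tψ : Xψ →ₗ[ℂ] Yψ)) ∧
      FiniteDimensional ℂ (Yψ ⧸ LinearMap.range (Tψ : Xψ →ₗ[ℂ] Yψ)) ∧
      (∀ x : Xψ, Tψ x = 0 ↔ ∃ x₁ : X₁, jX x₁ = x ∧ T₁ x₁ = 0) ∧
      ((Module.finrank ℂ (LinearMap.ker (Tψ : Xψ →ₗ[ℂ] Yψ)) : ℤ) -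
          Module.finrank ℂ (Yψ ⧸ LinearMap.range (Tψ : Xψ →ₗ[ℂ] Yψ)) =
        (Module.finrank ℂ (LinearMap.ker (T₀ : X₀ →ₗ[ℂ] Y₀)) : ℤ) -
          Module.finrank ℂ (Y₀ ⧸ LinearMap.range (T₀ : X₀ →ₗ[ℂ] Y₀))) ∧
      (∀ y : Yψ, (∃ x : Xψ, Tψ x = y) ↔ ∃ x₀ : X₀, T₀ x₀ = κY y) := by
    classical
  haveI := hker₀; haveI := hcoker₀; haveI := hker₁; haveI := hcoker₁
  -- jX is injective
  have hjXinj : Function.Injective jX := fun a b h => hιX (by rw [← hjX, ← hjX, h])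
  -- kernels coincide: `ker T₀ = ιX (ker T₁)`
  have hkermap : LinearMap.ker (T₀ : X₀ →ₗ[ℂ] Y₀) = (LinearMap.ker (T₁ : X₁ →ₗ[ℂ] Y₁)).map (ιX : X₁ →ₗ[ℂ] X₀) := by
    ext x
    constructor
    · intro hx
      obtain ⟨x₁, hx₁, hx₁'⟩ := hsamek x (LinearMap.mem_ker.1 hx)
      exact ⟨x₁, LinearMap.mem_ker.2 hx₁', hx₁⟩
    · rintro ⟨x₁, hx₁, rfl⟩
      have : T₀ (ιX x₁) = ιY (T₁ x₁) := hT x₁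
      rw [show T₁ x₁ = 0 from LinearMap.mem_ker.1 hx₁] at this
      simpa [LinearMap.mem_ker] using this
  -- kernel dimensions coincide
  have hkerdim : finrank ℂ (LinearMap.ker (T₀ : X₀ →ₗ[ℂ] Y₀)) = finrank ℂ (LinearMap.ker (T₁ : X₁ →ₗ[ℂ] Y₁)) := by
    rw [hkermap]
    exact (Submodule.equivMapOfInjective (ιX : X₁ →ₗ[ℂ] X₀) hιX
      (LinearMap.ker (T₁ : X₁ →ₗ[ℂ] Y₁))).symm.finrank_eq
  -- cokernel dimensions coincide
  have hcokerdim : finrank ℂ (Y₀ ⧸ LinearMap.range (T₀ : X₀ →ₗ[ℂ] Y₀)) = finrank ℂ (Y₁ ⧸ LinearMap.range (T₁ : X₁ →ₗ[ℂ] Y₁)) := by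
    omega
  -- range of T₀ is closed
  have hclosed : IsClosed ((LinearMap.range (T₀ : X₀ →ₗ[ℂ] Y₀) : Submodule ℂ Y₀) : Set Y₀) :=
    aux_closed_range T₀ hcoker₀
  haveI : CompleteSpace (LinearMap.range (T₀ : X₀ →ₗ[ℂ] Y₀) : Submodule ℂ Y₀) := hclosed.completeSpace_coe
  -- the orthogonal complement of the range is finite dimensional
  have horthQ : ((Y₀ ⧸ LinearMap.range (T₀ : X₀ →ₗ[ℂ] Y₀)) ≃ₗ[ℂ] ((LinearMap.range (T₀ : X₀ →ₗ[ℂ] Y₀))ᗮ : Submodule ℂ Y₀)) :=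
    Submodule.quotientEquivOfIsCompl _ _ (Submodule.isCompl_orthogonal_of_hasOrthogonalProjection)
  haveI hfinU : FiniteDimensional ℂ ((LinearMap.range (T₀ : X₀ →ₗ[ℂ] Y₀))ᗮ : Submodule ℂ Y₀) :=
    horthQ.finiteDimensional
  -- density consequences
  have hsub1 : ∀ y : Y₀, ∃ z : Y₁, y - ιY z ∈ LinearMap.range (T₀ : X₀ →ₗ[ℂ] Y₀) :=
    aux_dense_sub ιY hdιY _ hclosed hfinU
  have hsubψ : ∀ y : Y₀, ∃ z : Yψ, y - κY z ∈ LinearMap.range (T₀ : X₀ →ₗ[ℂ] Y₀) :=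
    aux_dense_sub κY hdκY _ hclosed hfinU
  -- the bridge: `ιY y₁ ∈ range T₀ → y₁ ∈ range T₁`
  have hbridge : ∀ y₁ : Y₁, ιY y₁ ∈ LinearMap.range (T₀ : X₀ →ₗ[ℂ] Y₀) → ∃ u : X₁, T₁ u = y₁ := by
    have hle : LinearMap.range (T₁ : X₁ →ₗ[ℂ] Y₁) ≤ LinearMap.ker
        ((LinearMap.range (T₀ : X₀ →ₗ[ℂ] Y₀)).mkQ.comp (ιY : Y₁ →ₗ[ℂ] Y₀)) := by
      rintro y ⟨u, rfl⟩
      simp only [LinearMap.mem_ker, LinearMap.comp_apply, ContinuousLinearMap.coe_coe]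
      rw [← hT u, Submodule.mkQ_apply, Submodule.Quotient.mk_eq_zero]
      exact LinearMap.mem_range_self _ _
    set b : (Y₁ ⧸ LinearMap.range (T₁ : X₁ →ₗ[ℂ] Y₁)) →ₗ[ℂ] (Y₀ ⧸ LinearMap.range (T₀ : X₀ →ₗ[ℂ] Y₀)) :=
      Submodule.liftQ _ _ hle with hb
    have hbmk : ∀ y : Y₁, b (Submodule.Quotient.mk y)
        = Submodule.Quotient.mk (ιY y) := fun y => rfl
    have hbsurj : Function.Surjective b := by
      intro q
      obtain ⟨y, rfl⟩ := Submodule.Quotient.mk_surjective _ q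
      obtain ⟨z, hz⟩ := hsub1 y
      refine ⟨Submodule.Quotient.mk z, ?_⟩
      rw [hbmk, Submodule.Quotient.eq]
      simpa using Submodule.neg_mem _ hz
    have hbinj : Function.Injective b :=
      (LinearMap.injective_iff_surjective_of_finrank_eq_finrank hcokerdim.symm).2 hbsurj
    intro y₁ hy₁
    have : b (Submodule.Quotient.mk y₁) = b 0 := by
      rw [map_zero, hbmk, Submodule.Quotient.mk_eq_zero]
      exact hy₁
    have h0 : (Submodule.Quotient.mk y₁ : Y₁ ⧸ LinearMap.range (T₁ : X₁ →ₗ[ℂ] Y₁)) = 0 := hbinj this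
    rw [Submodule.Quotient.mk_eq_zero] at h0
    obtain ⟨u, hu⟩ := h0
    exact ⟨u, hu⟩
  -- the projection onto the orthogonal complement of the range of T₀
  have horth : ((LinearMap.range (T₀ : X₀ →ₗ[ℂ] Y₀))ᗮᗮ : Submodule ℂ Y₀) = LinearMap.range (T₀ : X₀ →ₗ[ℂ] Y₀) :=
    Submodule.orthogonal_orthogonal _
  set U : Submodule ℂ Y₀ := (LinearMap.range (T₀ : X₀ →ₗ[ℂ] Y₀))ᗮ with hU
  set Pr : Y₀ →L[ℂ] U := Submodule.orthogonalProjectionOnto U with hPrdef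
  have hPrker : ∀ y : Y₀, Pr y = 0 ↔ y ∈ LinearMap.range (T₀ : X₀ →ₗ[ℂ] Y₀) := by
    intro y
    constructor
    · intro hy
      have : y - ((Submodule.orthogonalProjectionOnto U y : U) : Y₀) ∈ Uᗮ :=
        Submodule.sub_starProjection_mem_orthogonal (K := U) y
      rw [← hPrdef, hy] at this
      simpa [horth] using this
    · intro hy
      exact Submodule.orthogonalProjectionOnto_apply_of_mem_orthogonal
        (by simpa [horth] using hy)
  have hPrU : ∀ u : U, Pr (u : Y₀) = u := fun u => Submodule.orthogonalProjectionOnto_mem_subspace_eq_self u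
  -- a complement C of range T₁ inside Y₁
  obtain ⟨C, hC⟩ := Submodule.exists_isCompl (LinearMap.range (T₁ : X₁ →ₗ[ℂ] Y₁) : Submodule ℂ Y₁)
  haveI hCfin : FiniteDimensional ℂ C :=
    (Submodule.quotientEquivOfIsCompl _ _ hC).finiteDimensional
  set W : Submodule ℂ Y₀ := C.map (ιY : Y₁ →ₗ[ℂ] Y₀) with hW
  set eC : C ≃ₗ[ℂ] W := Submodule.equivMapOfInjective (ιY : Y₁ →ₗ[ℂ] Y₀) hιY C with heC
  have heCapp : ∀ c : C, (eC c : Y₀) = ιY (c : Y₁) := fun c => rfl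
  haveI hWfin : FiniteDimensional ℂ W := eC.finiteDimensional
  -- any element of W that lies in range T₀ is zero
  have hWr : ∀ w : W, (w : Y₀) ∈ LinearMap.range (T₀ : X₀ →ₗ[ℂ] Y₀) → w = 0 := by
    rintro ⟨w, hw⟩ hmem
    obtain ⟨c, hc, rfl⟩ := hw
    obtain ⟨u, hu⟩ := hbridge c hmem
    have : c ∈ LinearMap.range (T₁ : X₁ →ₗ[ℂ] Y₁) ⊓ C := ⟨⟨u, hu⟩, hc⟩
    rw [hC.inf_eq_bot] at this
    have hc0 : c = 0 := by simpa using this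
    exact Subtype.ext (by simp [hc0])
  -- dimension count
  have hdimWU : finrank ℂ W = finrank ℂ U := by
    have h1 : finrank ℂ W = finrank ℂ C := eC.symm.finrank_eq
    have h2 : finrank ℂ C = finrank ℂ (Y₁ ⧸ LinearMap.range (T₁ : X₁ →ₗ[ℂ] Y₁)) :=
      (Submodule.quotientEquivOfIsCompl _ _ hC).symm.finrank_eq
    have h3 : finrank ℂ U = finrank ℂ (Y₀ ⧸ LinearMap.range (T₀ : X₀ →ₗ[ℂ] Y₀)) := horthQ.symm.finrank_eq
    omega
  -- the linear isomorphism between W and U given by Pr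
  set fWU : W →ₗ[ℂ] U := (Pr : Y₀ →ₗ[ℂ] U).comp (W.subtype) with hfWU
  have hfWUinj : Function.Injective fWU := by
    intro w w' hww'
    have hPw : Pr (w : Y₀) = Pr (w' : Y₀) := hww'
    have h0 : Pr ((w : Y₀) - (w' : Y₀)) = 0 := by rw [map_sub, hPw, sub_self]
    have hmem : ((w - w' : W) : Y₀) ∈ LinearMap.range (T₀ : X₀ →ₗ[ℂ] Y₀) := (hPrker _).1 (by simpa using h0)
    have h1 := hWr _ hmem
    exact sub_eq_zero.1 h1
  set eW : W ≃ₗ[ℂ] U := LinearMap.linearEquivOfInjective fWU hfWUinj hdimWU with heW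
  have heWapp : ∀ w : W, eW w = Pr (w : Y₀) := fun w => rfl
  -- the finite rank projection-like operator G₀ on Y₀
  set G₀W : Y₀ →L[ℂ] W :=
    (LinearMap.toContinuousLinearMap (eW.symm : U →ₗ[ℂ] W)).comp Pr with hG₀W
  set G₀ : Y₀ →L[ℂ] Y₀ := (W.subtypeL).comp G₀W with hG₀
  have hG₀app : ∀ y : Y₀, G₀ y = ((eW.symm (Pr y) : W) : Y₀) := fun y => rfl
  have hG₀r : ∀ y ∈ LinearMap.range (T₀ : X₀ →ₗ[ℂ] Y₀), G₀ y = 0 := by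
    intro y hy
    rw [hG₀app, (hPrker y).2 hy]
    simp
  have hQ₀ : ∀ y : Y₀, y - G₀ y ∈ LinearMap.range (T₀ : X₀ →ₗ[ℂ] Y₀) := by
    intro y
    refine (hPrker _).1 ?_
    rw [map_sub]
    have : Pr (G₀ y) = Pr y := by
      rw [hG₀app]
      have : Pr ((eW.symm (Pr y) : W) : Y₀) = eW (eW.symm (Pr y)) := (heWapp _).symm
      rw [this, LinearEquiv.apply_symm_apply]
    rw [this, sub_self]
  -- the corresponding operator G₁ on Y₁
  set G₁ : Y₁ →L[ℂ] Y₁ :=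
    (C.subtypeL).comp ((LinearMap.toContinuousLinearMap (eC.symm : W →ₗ[ℂ] C)).comp
      (G₀W.comp ιY)) with hG₁
  have hG₁compat : ∀ y : Y₁, G₀ (ιY y) = ιY (G₁ y) := by
    intro y
    have h1 : G₁ y = (eC.symm (G₀W (ιY y)) : Y₁) := rfl
    have h2 : ιY ((eC.symm (G₀W (ιY y)) : C) : Y₁) = ((eC (eC.symm (G₀W (ιY y))) : W) : Y₀) :=
      (heCapp _).symm
    rw [h1, h2, LinearEquiv.apply_symm_apply]
    rfl
  have hQ₁ : ∀ y : Y₁, ∃ u : X₁, T₁ u = y - G₁ y := by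
    intro y
    refine hbridge _ ?_
    rw [map_sub, ← hG₁compat]
    exact hQ₀ (ιY y)
  -- inverting T₀ on the orthogonal complement of its kernel
  haveI : CompleteSpace (LinearMap.ker (T₀ : X₀ →ₗ[ℂ] Y₀)) := (ContinuousLinearMap.isClosed_ker T₀).completeSpace_coe
  haveI : CompleteSpace ((LinearMap.ker (T₀ : X₀ →ₗ[ℂ] Y₀))ᗮ : Submodule ℂ X₀) :=
    (Submodule.isClosed_orthogonal _).completeSpace_coe
  have hdecX : ∀ x : X₀, ∃ x' : ((LinearMap.ker (T₀ : X₀ →ₗ[ℂ] Y₀))ᗮ : Submodule ℂ X₀), T₀ x' = T₀ x := by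
    intro x
    refine ⟨⟨x - (Submodule.orthogonalProjectionOnto (LinearMap.ker (T₀ : X₀ →ₗ[ℂ] Y₀)) x : X₀),
      Submodule.sub_starProjection_mem_orthogonal x⟩, ?_⟩
    have hmem : T₀ ((Submodule.orthogonalProjectionOnto (LinearMap.ker (T₀ : X₀ →ₗ[ℂ] Y₀)) x : X₀)) = 0 :=
      LinearMap.mem_ker.1 (Submodule.orthogonalProjectionOnto (LinearMap.ker (T₀ : X₀ →ₗ[ℂ] Y₀)) x).2
    simp only [map_sub, hmem, sub_zero]
  set S' : ((LinearMap.ker (T₀ : X₀ →ₗ[ℂ] Y₀))ᗮ : Submodule ℂ X₀) →L[ℂ] (LinearMap.range (T₀ : X₀ →ₗ[ℂ] Y₀) : Submodule ℂ Y₀) :=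
    (T₀.comp (Submodule.subtypeL _)).codRestrict _
      (fun x => LinearMap.mem_range_self _ _) with hS'
  have hS'app : ∀ x, (S' x : Y₀) = T₀ (x : X₀) := fun x => rfl
  have hS'inj : LinearMap.ker (S' : ((LinearMap.ker (T₀ : X₀ →ₗ[ℂ] Y₀))ᗮ : Submodule ℂ X₀) →ₗ[ℂ] (LinearMap.range (T₀ : X₀ →ₗ[ℂ] Y₀))) = ⊥ := by
    rw [LinearMap.ker_eq_bot']
    intro x hx
    have h1 : T₀ (x : X₀) = 0 := by
      have := congrArg (Subtype.val) hx
      simpa [hS'app] using this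
    have hmem : (x : X₀) ∈ (LinearMap.ker (T₀ : X₀ →ₗ[ℂ] Y₀)) ⊓ (LinearMap.ker (T₀ : X₀ →ₗ[ℂ] Y₀))ᗮ :=
      ⟨LinearMap.mem_ker.2 h1, x.2⟩
    rw [Submodule.inf_orthogonal_eq_bot] at hmem
    exact Subtype.ext (by simpa using hmem)
  have hS'surj : LinearMap.range (S' : ((LinearMap.ker (T₀ : X₀ →ₗ[ℂ] Y₀))ᗮ : Submodule ℂ X₀) →ₗ[ℂ] (LinearMap.range (T₀ : X₀ →ₗ[ℂ] Y₀))) = ⊤ := by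
    rw [LinearMap.range_eq_top]
    rintro ⟨y, x, rfl⟩
    obtain ⟨x', hx'⟩ := hdecX x
    exact ⟨x', Subtype.ext (by change (S' x' : Y₀) = T₀ x; rw [hS'app, hx'])⟩
  set eS := ContinuousLinearEquiv.ofBijective S' hS'inj hS'surj with heS
  have heSapp : ∀ x, eS x = S' x := fun x => rfl
  set Q₀r : Y₀ →L[ℂ] (LinearMap.range (T₀ : X₀ →ₗ[ℂ] Y₀) : Submodule ℂ Y₀) :=
    (ContinuousLinearMap.id ℂ Y₀ - G₀).codRestrict _ (fun y => by simpa using hQ₀ y) with hQ₀r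
  have hQ₀rapp : ∀ y : Y₀, (Q₀r y : Y₀) = y - G₀ y := fun y => rfl
  set R₀ : Y₀ →L[ℂ] X₀ :=
    (Submodule.subtypeL _).comp ((eS.symm : (LinearMap.range (T₀ : X₀ →ₗ[ℂ] Y₀) : Submodule ℂ Y₀) →L[ℂ]
      ((LinearMap.ker (T₀ : X₀ →ₗ[ℂ] Y₀))ᗮ : Submodule ℂ X₀)).comp Q₀r) with hR₀
  have hR₀app : ∀ y : Y₀, R₀ y = ((eS.symm (Q₀r y) : ((LinearMap.ker (T₀ : X₀ →ₗ[ℂ] Y₀))ᗮ : Submodule ℂ X₀)) : X₀) :=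
    fun y => rfl
  have hTR₀ : ∀ y : Y₀, T₀ (R₀ y) = y - G₀ y := by
    intro y
    rw [hR₀app]
    have h1 : T₀ ((eS.symm (Q₀r y) : _) : X₀) = (S' (eS.symm (Q₀r y)) : Y₀) := rfl
    rw [h1, ← heSapp, eS.apply_symm_apply, hQ₀rapp]
  -- R₀ maps ιY (Y₁) into ιX (X₁)
  have hR₀X₁ : ∀ y : Y₁, ∃ x₁ : X₁, ιX x₁ = R₀ (ιY y) := by
    intro y
    obtain ⟨u, hu⟩ := hQ₁ y
    have h1 : T₀ (R₀ (ιY y)) = T₀ (ιX u) := by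
      rw [hTR₀, hT u, hu, map_sub, hG₁compat]
    have h2 : T₀ (R₀ (ιY y) - ιX u) = 0 := by rw [map_sub, h1, sub_self]
    obtain ⟨x', hx', _⟩ := hsamek _ h2
    exact ⟨u + x', by rw [map_add, hx']; abel⟩
  -- construct R₁ via the closed graph theorem
  let R₁fun : Y₁ → X₁ := fun y => Classical.choose (hR₀X₁ y)
  have hR₁spec : ∀ y, ιX (R₁fun y) = R₀ (ιY y) := fun y => Classical.choose_spec (hR₀X₁ y)
  have hadd : ∀ a b : Y₁, R₁fun (a + b) = R₁fun a + R₁fun b := by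
    intro a b; apply hιX
    simp only [map_add, hR₁spec]
  have hsmul : ∀ (c : ℂ) (a : Y₁), R₁fun (c • a) = c • R₁fun a := by
    intro c a; apply hιX
    simp only [map_smul, hR₁spec]
  let R₁lin : Y₁ →ₗ[ℂ] X₁ :=
    { toFun := R₁fun
      map_add' := hadd
      map_smul' := fun c a => by rw [RingHom.id_apply]; exact hsmul c a }
  have hR₁linapp : ∀ y, R₁lin y = R₁fun y := fun y => rfl
  have hR₁cont : Continuous R₁lin := by
    apply R₁lin.continuous_of_seq_closed_graph
    intro u x y hu hy
    apply hιX
    have h1 : Filter.Tendsto (fun n => ιX (R₁lin (u n))) Filter.atTop (nhds (ιX y)) :=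
      (ιX.continuous.tendsto _).comp hy
    have h2 : (fun n => ιX (R₁lin (u n))) = fun n => R₀ (ιY (u n)) :=
      funext fun n => hR₁spec _
    rw [h2] at h1
    have h3 : Filter.Tendsto (fun n => R₀ (ιY (u n))) Filter.atTop (nhds (R₀ (ιY x))) :=
      ((R₀.comp ιY).continuous.tendsto _).comp hu
    have h4 := tendsto_nhds_unique h1 h3
    rw [h4]
    exact (hR₁spec x).symm
  let R₁ : Y₁ →L[ℂ] X₁ := ⟨R₁lin, hR₁cont⟩
  have hR₁compat : ∀ y : Y₁, R₀ (ιY y) = ιX (R₁ y) := fun y => (hR₁spec y).symm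
  -- pass to the intermediate spaces
  obtain ⟨Tψ, hTψ⟩ := hXY T₀ T₁ hT
  obtain ⟨Rψ, hRψ⟩ := hYX R₀ R₁ hR₁compat
  refine ⟨Tψ, hTψ, ?_⟩
  -- kernel characterization
  have hker_char : ∀ x : Xψ, Tψ x = 0 ↔ ∃ x₁ : X₁, jX x₁ = x ∧ T₁ x₁ = 0 := by
    intro x
    constructor
    · intro hx
      have h0 : T₀ (κX x) = 0 := by rw [hTψ, hx, map_zero]
      obtain ⟨x₁, hx₁, hx₁'⟩ := hsamek _ h0
      refine ⟨x₁, hκX ?_, hx₁'⟩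
      rw [hjX, hx₁]
    · rintro ⟨x₁, rfl, hx₁⟩
      apply hκY
      rw [← hTψ, hjX, hT, hx₁, map_zero, map_zero]
  -- range characterization
  have hrange_char : ∀ y : Yψ, (∃ x : Xψ, Tψ x = y) ↔ ∃ x₀ : X₀, T₀ x₀ = κY y := by
    intro y
    constructor
    · rintro ⟨x, rfl⟩
      exact ⟨κX x, hTψ x⟩
    · rintro ⟨x₀, hx₀⟩
      refine ⟨Rψ y, hκY ?_⟩
      rw [← hTψ, ← hRψ, hTR₀, ← hx₀, hG₀r (T₀ x₀) (LinearMap.mem_range_self (T₀ : X₀ →ₗ[ℂ] Y₀) x₀), sub_zero, hx₀]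
  -- the kernel as a mapped submodule
  have hkerψ : LinearMap.ker (Tψ : Xψ →ₗ[ℂ] Yψ) = (LinearMap.ker (T₁ : X₁ →ₗ[ℂ] Y₁)).map (jX : X₁ →ₗ[ℂ] Xψ) := by
    ext x
    rw [LinearMap.mem_ker]
    constructor
    · intro hx
      obtain ⟨x₁, hx₁, hx₁'⟩ := (hker_char x).1 hx
      exact ⟨x₁, LinearMap.mem_ker.2 hx₁', hx₁⟩
    · rintro ⟨x₁, hx₁, rfl⟩
      exact (hker_char _).2 ⟨x₁, rfl, LinearMap.mem_ker.1 hx₁⟩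
  haveI hkerfin : FiniteDimensional ℂ (LinearMap.ker (Tψ : Xψ →ₗ[ℂ] Yψ)) := by
    rw [hkerψ]
    exact Module.Finite.map _ _
  have hkerdimψ : finrank ℂ (LinearMap.ker (Tψ : Xψ →ₗ[ℂ] Yψ)) = finrank ℂ (LinearMap.ker (T₁ : X₁ →ₗ[ℂ] Y₁)) := by
    rw [hkerψ]
    exact (Submodule.equivMapOfInjective (jX : X₁ →ₗ[ℂ] Xψ) hjXinj
      (LinearMap.ker (T₁ : X₁ →ₗ[ℂ] Y₁))).symm.finrank_eq
  -- the cokernel is isomorphic to that of T₀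
  have hqker : LinearMap.ker ((LinearMap.range (T₀ : X₀ →ₗ[ℂ] Y₀)).mkQ.comp (κY : Yψ →ₗ[ℂ] Y₀))
      = LinearMap.range (Tψ : Xψ →ₗ[ℂ] Yψ) := by
    ext y
    rw [LinearMap.mem_ker, LinearMap.comp_apply, ContinuousLinearMap.coe_coe,
      Submodule.mkQ_apply, Submodule.Quotient.mk_eq_zero, LinearMap.mem_range]
    constructor
    · intro hy
      obtain ⟨x₀, hx₀⟩ := hy
      exact (hrange_char y).2 ⟨x₀, hx₀⟩
    · intro hy
      obtain ⟨x₀, hx₀⟩ := (hrange_char y).1 hy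
      exact ⟨x₀, hx₀⟩
  have hqsurj : Function.Surjective ((LinearMap.range (T₀ : X₀ →ₗ[ℂ] Y₀)).mkQ.comp (κY : Yψ →ₗ[ℂ] Y₀)) := by
    intro q
    obtain ⟨y, rfl⟩ := Submodule.Quotient.mk_surjective _ q
    obtain ⟨z, hz⟩ := hsubψ y
    refine ⟨z, ?_⟩
    rw [LinearMap.comp_apply, ContinuousLinearMap.coe_coe, Submodule.mkQ_apply,
      Submodule.Quotient.eq]
    simpa using Submodule.neg_mem _ hz
  set Ecoker : (Yψ ⧸ LinearMap.range (Tψ : Xψ →ₗ[ℂ] Yψ)) ≃ₗ[ℂ] (Y₀ ⧸ LinearMap.range (T₀ : X₀ →ₗ[ℂ] Y₀)) :=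
    (Submodule.quotEquivOfEq _ _ hqker.symm).trans
      (LinearMap.quotKerEquivOfSurjective _ hqsurj) with hEcoker
  haveI hcokerfinψ : FiniteDimensional ℂ (Yψ ⧸ LinearMap.range (Tψ : Xψ →ₗ[ℂ] Yψ)) :=
    Ecoker.symm.finiteDimensional
  have hcokerdimψ : finrank ℂ (Yψ ⧸ LinearMap.range (Tψ : Xψ →ₗ[ℂ] Yψ)) = finrank ℂ (Y₀ ⧸ LinearMap.range (T₀ : X₀ →ₗ[ℂ] Y₀)) :=
    Ecoker.finrank_eq
  refine ⟨hkerfin, hcokerfinψ, hker_char, ?_, hrange_char⟩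
  rw [hkerdimψ, hcokerdimψ, ← hkerdim]
end
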